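/- arXiv:2502.03267 — 4 statements merged into one kernel-verified Lean document; each statement's English description precedes it below -/
import Mathlib

section
/- Let n ≥ 1 and δ ∈ (0, n). There exists a constant c > 0 depending only on n and δ such that for every function f : ℝⁿ → [−∞, ∞], every x ∈ ℝⁿ and every r > 0, the average inequality (1/H̃^n_∞(B(x,r))) ∫_{B(x,r)} |f| dH̃^n_∞ ≤ c · ( (1/H̃^δ_∞(B(x,r))) ∫_{B(x,r)} |f|^{δ/n} dH̃^δ_∞ )^{n/δ} holds; consequently M^n f(x) ≤ c · ( M^δ(|f|^{δ/n})(x) )^{n/δ} for all x ∈ ℝⁿ. -/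
open MeasureTheory Set Metric Filter Topology
open scoped ENNReal

noncomputable section

/-- Euclidean space `ℝⁿ`. -/
abbrev En (n : ℕ) : Type := EuclideanSpace ℝ (Fin n)

/-- The half-open dyadic cube `2^k (m + [0,1)ⁿ)`, `k : ℤ`, `m : ℤⁿ`. -/
def dyadicCube (n : ℕ) (k : ℤ) (m : Fin n → ℤ) : Set (En n) :=
  {x | ∀ i, (m i : ℝ) * 2 ^ k ≤ x i ∧ x i < ((m i : ℝ) + 1) * 2 ^ k}

/-- The `δ`-dimensional dyadic Hausdorff content `H̃^δ_∞`: the infimum of `Σ ℓ(Q_i)^δ`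
over all countable collections of dyadic cubes whose union's interior covers `E`. -/
def dyadicContent (n : ℕ) (δ : ℝ) (E : Set (En n)) : ℝ≥0∞ :=
  ⨅ (c : ℕ → ℤ × (Fin n → ℤ))
    (_ : E ⊆ interior (⋃ i, dyadicCube n (c i).1 (c i).2)),
    ∑' i, ENNReal.ofReal (((2 : ℝ) ^ (c i).1) ^ δ)

/-- The Choquet integral `∫_Ω f dH̃^δ_∞ := ∫_0^∞ H̃^δ_∞({x ∈ Ω : f x > t}) dt`
of a `[0,∞]`-valued function over `Ω ⊆ ℝⁿ`. -/
def choquetIntegral (n : ℕ) (δ : ℝ) (Ω : Set (En n)) (f : En n → ℝ≥0∞) : ℝ≥0∞ :=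
  ∫⁻ t in Ioi (0 : ℝ), dyadicContent n δ {x | x ∈ Ω ∧ ENNReal.ofReal t < f x}

/-- The Choquet integral `∫_Ω |f| dH̃^δ_∞` of a real-valued function. -/
def choquetIntegralAbs (n : ℕ) (δ : ℝ) (Ω : Set (En n)) (f : En n → ℝ) : ℝ≥0∞ :=
  choquetIntegral n δ Ω (fun x => ENNReal.ofReal |f x|)

/-- The Choquet integral `∫_Ω |f| dH̃^δ_∞` of an extended-real-valued function. -/
def choquetIntegralEAbs (n : ℕ) (δ : ℝ) (Ω : Set (En n)) (f : En n → EReal) : ℝ≥0∞ :=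
  choquetIntegral n δ Ω (fun x => (f x).abs)

/-- The ball average `f^δ_{B(x,r)} := (1/H̃^δ_∞(B(x,r))) ∫_{B(x,r)} f dH̃^δ_∞`. -/
def ballAvg (n : ℕ) (δ : ℝ) (f : En n → ℝ≥0∞) (x : En n) (r : ℝ) : ℝ≥0∞ :=
  choquetIntegral n δ (ball x r) f / dyadicContent n δ (ball x r)

/-- The Hausdorff-content centred maximal function `M^δ f(x)`. -/
def maximal (n : ℕ) (δ : ℝ) (f : En n → ℝ≥0∞) (x : En n) : ℝ≥0∞ :=
  ⨆ (r : ℝ) (_ : 0 < r), ballAvg n δ f x r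

/-- `f^δ_*(x) := limsup_{r→0⁺} (1/H̃^δ_∞(B(x,r))) ∫_{B(x,r)} |f(y) − f(x)| dH̃^δ_∞(y)`. -/
def lebDev (n : ℕ) (δ : ℝ) (f : En n → ℝ) (x : En n) : ℝ≥0∞ :=
  limsup (fun r : ℝ => choquetIntegralAbs n δ (ball x r) (fun y => f y - f x) /
    dyadicContent n δ (ball x r)) (𝓝[>] (0 : ℝ))

/-- `limsup_{r→0⁺} f^δ_{B(x,r)}` of the ball averages. -/
def limsupAvg (n : ℕ) (δ : ℝ) (f : En n → ℝ≥0∞) (x : En n) : ℝ≥0∞ :=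
  limsup (fun r : ℝ => ballAvg n δ f x r) (𝓝[>] (0 : ℝ))

namespace Aux

lemma content_mono {n : ℕ} {δ : ℝ} {E F : Set (En n)} (h : E ⊆ F) :
    dyadicContent n δ E ≤ dyadicContent n δ F :=
  le_iInf₂ fun c hc => iInf₂_le c (h.trans hc)

lemma tsum_rpow_le {a : ℕ → ℝ≥0∞} {p : ℝ} (hp : 1 ≤ p) :
    ∑' i, a i ^ p ≤ (∑' i, a i) ^ p := by
  set S := ∑' i, a i with hSdef
  have hp0 : (0:ℝ) ≤ p - 1 := by linarith
  calc ∑' i, a i ^ p ≤ ∑' i, S ^ (p-1) * a i := by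
        refine ENNReal.tsum_le_tsum fun i => ?_
        have h1 : a i ^ p = a i ^ (p-1) * a i ^ (1:ℝ) := by
          rw [← ENNReal.rpow_add_of_nonneg _ _ hp0 zero_le_one]; norm_num
        rw [h1, ENNReal.rpow_one]
        exact mul_le_mul_left (ENNReal.rpow_le_rpow (ENNReal.le_tsum i) hp0) _
    _ = S ^ (p-1) * S := ENNReal.tsum_mul_left
    _ = S ^ p := by
        have h := (ENNReal.rpow_add_of_nonneg (x := S) _ _ hp0 zero_le_one).symm
        simpa using h

lemma content_n_le_rpow (n : ℕ) {δ : ℝ} (hδ0 : 0 < δ) (hδn : δ ≤ n) (E : Set (En n)) :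
    dyadicContent n n E ≤ dyadicContent n δ E ^ ((n:ℝ)/δ) := by
  have hp1 : 1 ≤ (n:ℝ)/δ := (one_le_div hδ0).2 hδn
  have hp0 : (0:ℝ) < (n:ℝ)/δ := lt_of_lt_of_le one_pos hp1
  have key : ∀ c : ℕ → ℤ × (Fin n → ℤ), E ⊆ interior (⋃ i, dyadicCube n (c i).1 (c i).2) →
      dyadicContent n n E ≤ (∑' i, ENNReal.ofReal (((2:ℝ) ^ (c i).1) ^ δ)) ^ ((n:ℝ)/δ) := by
    intro c hc
    refine le_trans (iInf₂_le (α := ℝ≥0∞) c hc) ?_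
    have he : ∀ i : ℕ, ENNReal.ofReal (((2:ℝ) ^ (c i).1) ^ ((n:ℕ):ℝ)) =
        (ENNReal.ofReal (((2:ℝ) ^ (c i).1) ^ δ)) ^ ((n:ℝ)/δ) := by
      intro i
      have h2 : (0:ℝ) < (2:ℝ) ^ (c i).1 := zpow_pos (by norm_num) _
      rw [ENNReal.ofReal_rpow_of_pos (Real.rpow_pos_of_pos h2 δ), ← Real.rpow_mul h2.le]
      congr 2
      field_simp
    calc ∑' i, ENNReal.ofReal (((2:ℝ) ^ (c i).1) ^ ((n:ℕ):ℝ))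
        = ∑' i, (ENNReal.ofReal (((2:ℝ) ^ (c i).1) ^ δ)) ^ ((n:ℝ)/δ) := tsum_congr he
      _ ≤ _ := tsum_rpow_le hp1
  have h2 : dyadicContent n n E ^ (((n:ℝ)/δ)⁻¹) ≤ dyadicContent n δ E := by
    refine le_iInf₂ fun c hc => ?_
    calc dyadicContent n n E ^ (((n:ℝ)/δ)⁻¹)
        ≤ ((∑' i, ENNReal.ofReal (((2:ℝ) ^ (c i).1) ^ δ)) ^ ((n:ℝ)/δ)) ^ (((n:ℝ)/δ)⁻¹) :=
          ENNReal.rpow_le_rpow (key c hc) (inv_nonneg.2 hp0.le)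
      _ = _ := ENNReal.rpow_rpow_inv hp0.ne' _
  calc dyadicContent n n E = (dyadicContent n n E ^ (((n:ℝ)/δ)⁻¹)) ^ ((n:ℝ)/δ) :=
        (ENNReal.rpow_inv_rpow hp0.ne' _).symm
    _ ≤ _ := ENNReal.rpow_le_rpow h2 hp0.le

lemma volume_dyadicCube (n : ℕ) (k : ℤ) (m : Fin n → ℤ) :
    volume (dyadicCube n k m) = ENNReal.ofReal (((2:ℝ) ^ k) ^ ((n:ℕ):ℝ)) := by
  have hpres := EuclideanSpace.volume_preserving_symm_measurableEquiv_toLp (Fin n)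
  have hset : dyadicCube n k m = ((MeasurableEquiv.toLp 2 (Fin n → ℝ)).symm) ⁻¹'
      (Set.pi univ fun i => Ico ((m i : ℝ) * 2 ^ k) (((m i : ℝ) + 1) * 2 ^ k)) := by
    ext x
    simp [dyadicCube, Set.mem_pi]
  rw [hset, hpres.measure_preimage ?_]
  · rw [volume_pi_pi]
    have : ∀ i : Fin n, volume (Ico ((m i : ℝ) * 2 ^ k) (((m i : ℝ) + 1) * 2 ^ k))
        = ENNReal.ofReal ((2:ℝ) ^ k) := by
      intro i; rw [Real.volume_Ico]; congr 1; ring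
    rw [Finset.prod_congr rfl (fun i _ => this i), Finset.prod_const]
    have h2 : (0:ℝ) ≤ (2:ℝ) ^ k := le_of_lt (zpow_pos (by norm_num) _)
    rw [← ENNReal.ofReal_pow h2, Real.rpow_natCast]
    simp
  · exact (MeasurableSet.univ_pi fun i => measurableSet_Ico).nullMeasurableSet

lemma volume_le_content (n : ℕ) (E : Set (En n)) :
    volume E ≤ dyadicContent n n E := by
  refine le_iInf₂ fun c hc => ?_
  calc volume E ≤ volume (⋃ i, dyadicCube n (c i).1 (c i).2) :=
        measure_mono (hc.trans interior_subset)
    _ ≤ ∑' i, volume (dyadicCube n (c i).1 (c i).2) := measure_iUnion_le _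
    _ = ∑' i, ENNReal.ofReal (((2:ℝ) ^ (c i).1) ^ ((n:ℕ):ℝ)) := by
        exact tsum_congr fun i => volume_dyadicCube n _ _

lemma exists_scale {r : ℝ} (hr : 0 < r) : ∃ k : ℤ, 4*r ≤ (2:ℝ)^k ∧ (2:ℝ)^k < 8*r := by
  refine ⟨⌈Real.logb 2 (4*r)⌉, ?_, ?_⟩
  · have h1 : Real.logb 2 (4*r) ≤ (⌈Real.logb 2 (4*r)⌉ : ℝ) := Int.le_ceil _
    calc 4*r = (2:ℝ) ^ Real.logb 2 (4*r) := (Real.rpow_logb (by norm_num) (by norm_num) (by linarith)).symm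
      _ ≤ (2:ℝ) ^ ((⌈Real.logb 2 (4*r)⌉ : ℤ) : ℝ) := by
          exact Real.rpow_le_rpow_left_iff (by norm_num) |>.2 h1
      _ = (2:ℝ) ^ (⌈Real.logb 2 (4*r)⌉ : ℤ) := Real.rpow_intCast 2 _
  · have h1 : ((⌈Real.logb 2 (4*r)⌉ : ℤ) : ℝ) < Real.logb 2 (4*r) + 1 := Int.ceil_lt_add_one _
    calc (2:ℝ) ^ (⌈Real.logb 2 (4*r)⌉ : ℤ) = (2:ℝ) ^ ((⌈Real.logb 2 (4*r)⌉ : ℤ) : ℝ) :=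
          (Real.rpow_intCast 2 _).symm
      _ < (2:ℝ) ^ (Real.logb 2 (4*r) + 1) := Real.rpow_lt_rpow_left_iff (by norm_num) |>.2 h1
      _ = 8*r := by
          rw [Real.rpow_add (by norm_num), Real.rpow_logb (by norm_num) (by norm_num) (by linarith)]
          norm_num; ring

lemma abs_coord_le_dist {n : ℕ} (y x : En n) (j : Fin n) : |y j - x j| ≤ dist y x := by
  rw [EuclideanSpace.dist_eq]
  calc |y j - x j| = dist (y j) (x j) := (Real.dist_eq _ _).symm
    _ = Real.sqrt (dist (y j) (x j) ^ 2) := (Real.sqrt_sq dist_nonneg).symm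
    _ ≤ _ := Real.sqrt_le_sqrt (Finset.single_le_sum
        (f := fun i => dist (y i) (x i) ^ 2) (fun i _ => sq_nonneg _) (Finset.mem_univ j))

lemma content_ball_le (n : ℕ) {δ : ℝ} (hδ0 : 0 < δ) (x : En n) {r : ℝ} (hr : 0 < r) :
    dyadicContent n δ (ball x r) ≤
      ENNReal.ofReal ((8*r) ^ δ) *
        ((2:ℝ≥0∞) ^ n + (1 - ENNReal.ofReal ((2:ℝ) ^ (-δ)))⁻¹) := by
  obtain ⟨k, h4, h8⟩ := exists_scale hr
  have h2k : (0:ℝ) < (2:ℝ)^k := zpow_pos (by norm_num) _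
  set m : Fin n → ℤ := fun j => ⌊(x j - 2*r)/(2:ℝ)^k⌋ with hm
  have hml : ∀ j, (m j : ℝ) * 2^k ≤ x j - 2*r := by
    intro j
    rw [← le_div_iff₀ h2k]
    exact Int.floor_le _
  have hmu : ∀ j, x j - 2*r < ((m j : ℝ) + 1) * 2^k := by
    intro j
    rw [← div_lt_iff₀ h2k]
    exact Int.lt_floor_add_one _
  set L : List (Fin n → ℤ) :=
    (Finset.univ : Finset (Fin n → Bool)).toList.map
      (fun b j => m j + if b j then 1 else 0) with hL
  have hlen : L.length = 2^n := by
    rw [hL, List.length_map, Finset.length_toList]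
    simp [Finset.card_univ]
  set c : ℕ → ℤ × (Fin n → ℤ) :=
    fun i => if h : i < L.length then (k, L.get ⟨i, h⟩) else (k - 1 - i, m) with hc
  have heq : ∀ (z : En n) (j : Fin n), (WithLp.equiv 2 (Fin n → ℝ)) z j = z j := fun _ _ => rfl
  have hcover : ball x r ⊆ interior (⋃ i, dyadicCube n (c i).1 (c i).2) := by
    set U : Set (En n) := (⇑(WithLp.equiv 2 (Fin n → ℝ))) ⁻¹'
      (Set.pi univ fun j => Ioo ((m j : ℝ) * 2^k) (((m j : ℝ) + 2) * 2^k)) with hU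
    have hUopen : IsOpen U := by
      apply IsOpen.preimage
      · exact PiLp.continuous_ofLp 2 _
      · exact isOpen_set_pi finite_univ (fun j _ => isOpen_Ioo)
    have hsub1 : ball x r ⊆ U := by
      intro y hy
      rw [hU]
      simp only [mem_preimage, Set.mem_pi, mem_univ, forall_true_left, mem_Ioo, heq]
      intro j
      have hd : |y j - x j| < r := lt_of_le_of_lt (abs_coord_le_dist y x j) (mem_ball.1 hy)
      obtain ⟨hd1, hd2⟩ := abs_lt.1 hd
      have e2 : ((m j : ℝ) + 2) * 2^k = ((m j : ℝ) + 1) * 2^k + 2^k := by ring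
      constructor
      · have := hml j; linarith
      · have := hmu j; linarith
    have hsub2 : U ⊆ ⋃ i, dyadicCube n (c i).1 (c i).2 := by
      intro y hy
      rw [hU] at hy
      simp only [mem_preimage, Set.mem_pi, mem_univ, forall_true_left, mem_Ioo, heq] at hy
      set b : Fin n → Bool := fun j => decide (((m j : ℝ) + 1) * 2^k ≤ y j) with hb
      have hmem : (fun j => m j + if b j then 1 else 0) ∈ L := by
        rw [hL]
        exact List.mem_map.2 ⟨b, by simp, rfl⟩
      obtain ⟨i, hi⟩ := List.mem_iff_get.1 hmem
      refine mem_iUnion.2 ⟨(i : ℕ), ?_⟩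
      have hidx : ((i : ℕ) : ℕ) < L.length := i.isLt
      have hc1 : c (i : ℕ) = (k, L.get i) := by
        rw [hc]; simp only [hidx, dif_pos]
      rw [hc1, hi]
      intro j
      obtain ⟨hyj1, hyj2⟩ := hy j
      by_cases hbj : ((m j : ℝ) + 1) * 2^k ≤ y j
      · have hbt : b j = true := by rw [hb]; simp [hbj]
        simp only [hbt, if_pos]
        push_cast
        refine ⟨by linarith, ?_⟩
        have e2 : ((m j : ℝ) + 1 + 1) * 2^k = ((m j : ℝ) + 2) * 2^k := by ring
        rw [e2]; exact hyj2
      · have hbf : b j = false := by rw [hb]; simp [hbj]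
        simp only [hbf, if_neg]
        push_cast
        push_neg at hbj
        exact ⟨by linarith, by linarith⟩
    exact fun y hy => interior_maximal hsub2 hUopen (hsub1 hy)
  refine le_trans (iInf₂_le (α := ℝ≥0∞) c hcover) ?_
  set A := ENNReal.ofReal (((2:ℝ)^k) ^ δ) with hA
  set q := ENNReal.ofReal ((2:ℝ) ^ (-δ)) with hq
  have hq1 : q ≤ 1 := by
    rw [hq]
    refine ENNReal.ofReal_le_one.2 ?_
    exact le_of_lt (Real.rpow_lt_one_of_one_lt_of_neg (by norm_num) (by linarith))
  have hterm : ∀ i, ENNReal.ofReal (((2:ℝ) ^ (c i).1) ^ δ) ≤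
      (if i < L.length then A else 0) + A * q ^ i := by
    intro i
    by_cases h : i < L.length
    · rw [hc]; simp only [h, dif_pos, if_pos]
      exact le_add_right (le_of_eq rfl)
    · rw [hc]; simp only [h, dif_neg, if_neg, not_false_iff]
      refine le_add_left ?_
      have e1 : ((2:ℝ) ^ (k - 1 - (i:ℤ))) ^ δ = ((2:ℝ)^k) ^ δ * ((2:ℝ) ^ (-δ)) ^ (i+1 : ℕ) := by
        rw [← Real.rpow_intCast 2 (k - 1 - (i:ℤ)), ← Real.rpow_intCast 2 k,
          ← Real.rpow_natCast ((2:ℝ) ^ (-δ)) (i+1)]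
        rw [← Real.rpow_mul (by norm_num : (0:ℝ) ≤ 2), ← Real.rpow_mul (by norm_num : (0:ℝ) ≤ 2),
          ← Real.rpow_mul (by norm_num : (0:ℝ) ≤ 2), ← Real.rpow_add (by norm_num : (0:ℝ) < 2)]
        congr 1
        push_cast
        ring
      rw [e1, ENNReal.ofReal_mul (Real.rpow_nonneg h2k.le δ), ← hA,
        ENNReal.ofReal_pow (Real.rpow_nonneg (by norm_num : (0:ℝ) ≤ 2) (-δ)), ← hq]
      have : q ^ (i+1) ≤ q ^ i := pow_le_pow_of_le_one zero_le hq1 (Nat.le_succ i)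
      exact mul_le_mul_right this A
  have hsum : ∑' i, ENNReal.ofReal (((2:ℝ) ^ (c i).1) ^ δ) ≤
      A * ((2:ℝ≥0∞)^n + (1 - q)⁻¹) := by
    calc ∑' i, ENNReal.ofReal (((2:ℝ) ^ (c i).1) ^ δ)
        ≤ ∑' i, ((if i < L.length then A else 0) + A * q ^ i) := ENNReal.tsum_le_tsum hterm
      _ = (∑' i, (if i < L.length then A else 0)) + ∑' i, A * q ^ i := ENNReal.tsum_add
      _ ≤ (2:ℝ≥0∞)^n * A + A * (1 - q)⁻¹ := by
          refine add_le_add ?_ ?_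
          · have : (∑' i, (if i < L.length then A else 0))
                = ∑ i ∈ Finset.range L.length, (if i < L.length then A else 0) := by
              refine tsum_eq_sum fun i hi => ?_
              rw [if_neg (by simpa using hi)]
            rw [this]
            calc ∑ i ∈ Finset.range L.length, (if i < L.length then A else 0)
                ≤ ∑ _i ∈ Finset.range L.length, A :=
                  Finset.sum_le_sum fun i _ => by split <;> simp
              _ = (L.length : ℝ≥0∞) * A := by rw [Finset.sum_const, nsmul_eq_mul, Finset.card_range]
              _ = (2:ℝ≥0∞)^n * A := by rw [hlen]; push_cast; ring_nf
          · rw [ENNReal.tsum_mul_left, ENNReal.tsum_geometric]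
      _ = A * ((2:ℝ≥0∞)^n + (1 - q)⁻¹) := by ring
  refine hsum.trans ?_
  have hA8 : A ≤ ENNReal.ofReal ((8*r) ^ δ) := by
    rw [hA]
    exact ENNReal.ofReal_le_ofReal (Real.rpow_le_rpow h2k.le h8.le hδ0.le)
  exact mul_le_mul_left hA8 _

lemma distrib_antitone {n : ℕ} {δ : ℝ} {B : Set (En n)} {g : En n → ℝ≥0∞} :
    Antitone (fun t : ℝ => dyadicContent n δ {x | x ∈ B ∧ ENNReal.ofReal t < g x}) := by
  intro t t' h
  exact content_mono fun y hy => ⟨hy.1, lt_of_le_of_lt (ENNReal.ofReal_le_ofReal h) hy.2⟩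

lemma chebyshev {n : ℕ} {δ : ℝ} {B : Set (En n)} {g : En n → ℝ≥0∞} {s : ℝ} (hs : 0 < s) :
    ENNReal.ofReal s * dyadicContent n δ {x | x ∈ B ∧ ENNReal.ofReal s < g x} ≤
      choquetIntegral n δ B g := by
  set H : ℝ → ℝ≥0∞ := fun t => dyadicContent n δ {x | x ∈ B ∧ ENNReal.ofReal t < g x} with hH
  calc ENNReal.ofReal s * H s = ∫⁻ _t in Ioo (0:ℝ) s, H s := by
        rw [setLIntegral_const, Real.volume_Ioo, sub_zero, mul_comm]
    _ ≤ ∫⁻ t in Ioo (0:ℝ) s, H t :=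
        setLIntegral_mono' measurableSet_Ioo (fun t ht => distrib_antitone ht.2.le)
    _ ≤ ∫⁻ t in Ioi (0:ℝ), H t := lintegral_mono_set Ioo_subset_Ioi_self

lemma lintegral_image_abs_deriv {s : Set ℝ} {f f' : ℝ → ℝ} (hs : MeasurableSet s)
    (hf' : ∀ x ∈ s, HasDerivWithinAt f (f' x) s x) (hf : InjOn f s) (g : ℝ → ℝ≥0∞) :
    ∫⁻ x in f '' s, g x = ∫⁻ x in s, ENNReal.ofReal |f' x| * g (f x) := by
  simpa only [ContinuousLinearMap.det_toSpanSingleton] using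
    lintegral_image_eq_lintegral_abs_det_fderiv_mul volume hs
      (fun x hx => (hf' x hx).hasFDerivWithinAt) hf g

lemma lintegral_comp_rpow {p : ℝ} (hp : 0 < p) (g : ℝ → ℝ≥0∞) :
    ∫⁻ t in Ioi (0:ℝ), g t = ∫⁻ s in Ioi (0:ℝ), ENNReal.ofReal (p * s ^ (p-1)) * g (s ^ p) := by
  have himg : (fun s : ℝ => s ^ p) '' Ioi 0 = Ioi 0 := by
    ext t
    constructor
    · rintro ⟨s, hs, rfl⟩
      exact Real.rpow_pos_of_pos hs p
    · intro ht
      refine ⟨t ^ (1/p), Real.rpow_pos_of_pos ht _, ?_⟩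
      show (t ^ (1/p)) ^ p = t
      rw [← Real.rpow_mul (le_of_lt ht), one_div_mul_cancel hp.ne', Real.rpow_one]
  have hderiv : ∀ s ∈ Ioi (0:ℝ), HasDerivWithinAt (fun u : ℝ => u ^ p) (p * s ^ (p-1)) (Ioi 0) s :=
    fun s hs => (Real.hasDerivAt_rpow_const (Or.inl (ne_of_gt hs))).hasDerivWithinAt
  have hinj : InjOn (fun s : ℝ => s ^ p) (Ioi 0) := by
    have : StrictMonoOn (fun s : ℝ => s ^ p) (Ioi 0) :=
      fun a ha b _ hab => Real.rpow_lt_rpow (le_of_lt ha) hab hp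
    exact this.injOn
  have h := lintegral_image_abs_deriv measurableSet_Ioi hderiv hinj g
  rw [himg] at h
  rw [h]
  refine setLIntegral_congr_fun measurableSet_Ioi (fun s hs => ?_)
  have hs' : (0:ℝ) < s := hs
  congr 1
  rw [abs_of_pos (by positivity : (0:ℝ) < p * s ^ (p-1))]

lemma core (n : ℕ) {δ : ℝ} (hδ0 : 0 < δ) (hδn : δ < n) (F : En n → ℝ≥0∞) (B : Set (En n)) :
    choquetIntegral n n B F ≤
      ENNReal.ofReal ((n:ℝ)/δ) *
        (choquetIntegral n δ B (fun y => F y ^ (δ/(n:ℝ)))) ^ ((n:ℝ)/δ) := by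
  have hn0 : (0:ℝ) < n := hδ0.trans hδn
  set p : ℝ := (n:ℝ)/δ with hp
  have hp1 : 1 < p := (one_lt_div hδ0).2 hδn
  have hp0 : 0 < p := lt_trans one_pos hp1
  have hip : 0 < δ/(n:ℝ) := by positivity
  set g : En n → ℝ≥0∞ := fun y => F y ^ (δ/(n:ℝ)) with hg
  set H : ℝ → ℝ≥0∞ := fun s => dyadicContent n δ {x | x ∈ B ∧ ENNReal.ofReal s < g x} with hH
  set I : ℝ≥0∞ := choquetIntegral n δ B g with hI
  have hIint : I = ∫⁻ s in Ioi (0:ℝ), H s := rfl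
  -- step i : distribution comparison
  have hstep : ∀ t : ℝ, 0 < t →
      dyadicContent n n {x | x ∈ B ∧ ENNReal.ofReal t < F x} ≤ H (t ^ (δ/(n:ℝ))) ^ p := by
    intro t ht
    have hsets : {x | x ∈ B ∧ ENNReal.ofReal t < F x}
        = {x | x ∈ B ∧ ENNReal.ofReal (t ^ (δ/(n:ℝ))) < g x} := by
      ext y
      simp only [mem_setOf_eq, hg]
      refine and_congr_right fun _ => ?_
      rw [← ENNReal.ofReal_rpow_of_pos ht]
      exact (ENNReal.rpow_lt_rpow_iff hip).symm
    rw [hsets]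
    exact content_n_le_rpow n hδ0 hδn.le _
  rcases eq_or_ne I ∞ with hItop | hItop
  · have : (ENNReal.ofReal p) * I ^ p = ∞ := by
      rw [hItop, ENNReal.top_rpow_of_pos hp0, ENNReal.mul_top]
      simp [ENNReal.ofReal_eq_zero, not_le, hp0]
    calc choquetIntegral n n B F ≤ ∞ := le_top
      _ = _ := this.symm
  -- Chebyshev bound
  have hcheb : ∀ s : ℝ, 0 < s → H s ≤ I / ENNReal.ofReal s := by
    intro s hs
    rw [ENNReal.le_div_iff_mul_le (Or.inl (by simp [hs, ENNReal.ofReal_eq_zero, not_le] : ENNReal.ofReal s ≠ 0))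
      (Or.inl ENNReal.ofReal_ne_top)]
    rw [mul_comm]
    exact chebyshev hs
  calc choquetIntegral n n B F
      ≤ ∫⁻ t in Ioi (0:ℝ), H (t ^ (δ/(n:ℝ))) ^ p :=
        setLIntegral_mono' measurableSet_Ioi fun t ht => hstep t ht
    _ = ∫⁻ s in Ioi (0:ℝ), ENNReal.ofReal (p * s ^ (p-1)) * H ((s ^ p) ^ (δ/(n:ℝ))) ^ p :=
        lintegral_comp_rpow hp0 _
    _ = ∫⁻ s in Ioi (0:ℝ), ENNReal.ofReal (p * s ^ (p-1)) * H s ^ p := by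
        refine setLIntegral_congr_fun measurableSet_Ioi (fun s hs => ?_)
        have hs' : (0:ℝ) < s := hs
        congr 2
        rw [← Real.rpow_mul hs'.le]
        rw [show p * (δ/(n:ℝ)) = 1 by rw [hp]; field_simp, Real.rpow_one]
    _ ≤ ∫⁻ s in Ioi (0:ℝ), ENNReal.ofReal p * (I ^ (p-1) * H s) := by
        refine setLIntegral_mono' measurableSet_Ioi fun s hs => ?_
        have hs' : (0:ℝ) < s := hs
        have hsplit : H s ^ p = H s ^ (p-1) * H s := by
          have h := ENNReal.rpow_add_of_nonneg (x := H s) (p-1) 1 (by linarith) zero_le_one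
          simpa using h
        have hHle : H s ^ (p-1) ≤ (I / ENNReal.ofReal s) ^ (p-1) :=
          ENNReal.rpow_le_rpow (hcheb s hs') (by linarith)
        have hofr : ENNReal.ofReal (p * s ^ (p-1)) =
            ENNReal.ofReal p * (ENNReal.ofReal s) ^ (p-1) := by
          rw [ENNReal.ofReal_mul hp0.le, ENNReal.ofReal_rpow_of_pos hs']
        have ha0 : (ENNReal.ofReal s) ^ (p-1) ≠ 0 := by
          simp [ENNReal.rpow_eq_zero_iff, ENNReal.ofReal_eq_zero, not_le, hs', ENNReal.ofReal_ne_top]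
        have hat : (ENNReal.ofReal s) ^ (p-1) ≠ ∞ := by
          simp [ENNReal.rpow_eq_top_iff, ENNReal.ofReal_eq_zero, not_le, hs', ENNReal.ofReal_ne_top]
        calc ENNReal.ofReal (p * s ^ (p-1)) * H s ^ p
            ≤ ENNReal.ofReal p * (ENNReal.ofReal s) ^ (p-1) *
              ((I ^ (p-1) / (ENNReal.ofReal s) ^ (p-1)) * H s) := by
              rw [hofr, hsplit]
              refine mul_le_mul_right ?_ _
              refine mul_le_mul_left ?_ _
              rw [← ENNReal.div_rpow_of_nonneg _ _ (by linarith : (0:ℝ) ≤ p - 1)]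
              exact hHle
          _ = ENNReal.ofReal p * (I ^ (p-1) * H s) := by
              rw [mul_assoc]
              congr 1
              rw [← mul_assoc, ENNReal.mul_div_cancel ha0 hat]
    _ = ENNReal.ofReal p * (I ^ (p-1) * I) := by
        rw [lintegral_const_mul' _ _ ENNReal.ofReal_ne_top]
        congr 1
        rw [lintegral_const_mul' _ _ (by simp [ENNReal.rpow_eq_top_iff, hItop,
          sub_pos.2 hp1, asymm] : I ^ (p-1) ≠ ∞)]
        rw [← hIint]
    _ = ENNReal.ofReal p * I ^ p := by
        congr 1
        have h := (ENNReal.rpow_add_of_nonneg (x := I) (p-1) 1 (by linarith) zero_le_one).symm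
        simpa using h

end Aux

/-- pointwise comparison of `n`-dimensional and `δ`-dimensional
Hausdorff-content averages, and the resulting maximal function estimate
`M^n f(x) ≤ c (M^δ(|f|^{δ/n})(x))^{n/δ}`. -/
theorem pointwise_maximal_comparison (n : ℕ) (hn : 1 ≤ n)
    (δ : ℝ) (hδ0 : 0 < δ) (hδn : δ < n) :
    ∃ c : ℝ, 0 < c ∧ ∀ f : En n → EReal, ∀ x : En n,
      (∀ r : ℝ, 0 < r →
        ballAvg n (n : ℝ) (fun y => (f y).abs) x r ≤
          ENNReal.ofReal c *
            (ballAvg n δ (fun y => (f y).abs ^ (δ / (n : ℝ))) x r) ^ ((n : ℝ) / δ)) ∧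
      maximal n (n : ℝ) (fun y => (f y).abs) x ≤
        ENNReal.ofReal c *
          (maximal n δ (fun y => (f y).abs ^ (δ / (n : ℝ))) x) ^ ((n : ℝ) / δ) := by
  have hn0 : (0:ℝ) < n := hδ0.trans hδn
  set p : ℝ := (n:ℝ)/δ with hp
  have hp1 : 1 < p := (one_lt_div hδ0).2 hδn
  have hp0 : 0 < p := lt_trans one_pos hp1
  haveI : Nonempty (Fin n) := ⟨⟨0, hn⟩⟩
  haveI : Nontrivial (En n) := by
    refine ⟨0, EuclideanSpace.single ⟨0, hn⟩ 1, ?_⟩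
    intro h
    have := congrFun (congrArg (fun z : En n => (z : Fin n → ℝ)) h.symm) ⟨0, hn⟩
    simp [EuclideanSpace.single_apply] at this
  set v : ℝ≥0∞ := volume (ball (0 : En n) 1) with hv
  have hv0 : v ≠ 0 := (measure_ball_pos volume (0 : En n) one_pos).ne'
  have hvtop : v ≠ ∞ := measure_ball_lt_top.ne
  set K : ℝ≥0∞ := (2:ℝ≥0∞) ^ n + (1 - ENNReal.ofReal ((2:ℝ) ^ (-δ)))⁻¹ with hK
  have hKtop : K ≠ ∞ := by
    rw [hK]
    refine ENNReal.add_ne_top.2 ⟨by simp, ?_⟩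
    rw [Ne, ENNReal.inv_eq_top, tsub_eq_zero_iff_le]
    intro habs
    have h1 : ENNReal.ofReal ((2:ℝ) ^ (-δ)) < 1 := by
      rw [← ENNReal.ofReal_one]
      exact ENNReal.ofReal_lt_ofReal_iff_of_nonneg (Real.rpow_nonneg (by norm_num) _) |>.2
        (Real.rpow_lt_one_of_one_lt_of_neg (by norm_num) (by linarith))
    exact absurd habs (not_le.2 h1)
  set X : ℝ≥0∞ := ENNReal.ofReal (p * 8 ^ n) * K ^ p with hX
  have hXtop : X ≠ ∞ := by
    rw [hX]
    exact ENNReal.mul_ne_top ENNReal.ofReal_ne_top (by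
      simp [ENNReal.rpow_eq_top_iff, hKtop, asymm, hp0, not_lt.2 hp0.le])
  refine ⟨(X / v).toReal + 1, by positivity, ?_⟩
  intro f x
  set F : En n → ℝ≥0∞ := fun y => (f y).abs with hF
  set g : En n → ℝ≥0∞ := fun y => (f y).abs ^ (δ / (n:ℝ)) with hg
  set c : ℝ := (X / v).toReal + 1 with hc
  have hofc : X / v ≤ ENNReal.ofReal c := by
    have hfin : X / v ≠ ∞ := by
      simp [ENNReal.div_eq_top, hXtop, hv0]
    calc X / v = ENNReal.ofReal ((X / v).toReal) := (ENNReal.ofReal_toReal hfin).symm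
      _ ≤ ENNReal.ofReal c := ENNReal.ofReal_le_ofReal (by rw [hc]; linarith)
  have hball : ∀ r : ℝ, 0 < r →
      ballAvg n (n : ℝ) F x r ≤ ENNReal.ofReal c * (ballAvg n δ g x r) ^ p := by
    intro r hr
    set B : Set (En n) := ball x r with hB
    set Hn := dyadicContent n n B with hHn
    set Hd := dyadicContent n δ B with hHd
    -- lower bound for Hn
    have hHnlb : ENNReal.ofReal (r ^ n) * v ≤ Hn := by
      calc ENNReal.ofReal (r ^ n) * v = volume B := by
            rw [hB, Measure.addHaar_ball _ _ hr.le, finrank_euclideanSpace_fin]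
        _ ≤ Hn := Aux.volume_le_content n B
    have hHn0 : Hn ≠ 0 := by
      refine fun h0 => absurd (hHnlb.trans_eq h0) (not_le.2 ?_)
      exact ENNReal.mul_pos (by simp [ENNReal.ofReal_eq_zero, not_le]; positivity) hv0
    -- upper bound for Hd
    have hHdub : Hd ≤ ENNReal.ofReal ((8*r) ^ δ) * K := Aux.content_ball_le n hδ0 x hr
    have hHdtop : Hd ≠ ∞ :=
      (hHdub.trans_lt (ENNReal.mul_lt_top ENNReal.ofReal_lt_top hKtop.lt_top)).ne
    have hHntop : Hn ≠ ∞ := by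
      refine ((Aux.content_n_le_rpow n hδ0 hδn.le B).trans_lt ?_).ne
      exact ENNReal.rpow_lt_top_of_nonneg hp0.le hHdtop
    have hHd0 : Hd ≠ 0 := by
      intro h0
      have := Aux.content_n_le_rpow n hδ0 hδn.le B
      rw [← hHd, h0, ENNReal.zero_rpow_of_pos hp0] at this
      exact hHn0 (le_antisymm (hHn ▸ this) zero_le)
    -- key constant inequality : ofReal p * Hd ^ p ≤ ofReal c * Hn
    have hkey : ENNReal.ofReal p * Hd ^ p ≤ ENNReal.ofReal c * Hn := by
      have h1 : Hd ^ p ≤ ENNReal.ofReal (8 ^ n * r ^ n) * K ^ p := by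
        calc Hd ^ p ≤ (ENNReal.ofReal ((8*r) ^ δ) * K) ^ p :=
              ENNReal.rpow_le_rpow hHdub hp0.le
          _ = ENNReal.ofReal ((8*r) ^ δ) ^ p * K ^ p :=
              ENNReal.mul_rpow_of_nonneg _ _ hp0.le
          _ = ENNReal.ofReal (8 ^ n * r ^ n) * K ^ p := by
              congr 1
              rw [ENNReal.ofReal_rpow_of_pos (Real.rpow_pos_of_pos (by linarith) δ)]
              congr 1
              rw [← Real.rpow_mul (by linarith : (0:ℝ) ≤ 8*r),
                show δ * p = ((n:ℕ):ℝ) by rw [hp]; field_simp,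
                Real.rpow_natCast, mul_pow]
      calc ENNReal.ofReal p * Hd ^ p
          ≤ ENNReal.ofReal p * (ENNReal.ofReal (8 ^ n * r ^ n) * K ^ p) :=
            mul_le_mul_right h1 _
        _ = X * ENNReal.ofReal (r ^ n) := by
            rw [hX, ENNReal.ofReal_mul (by positivity : (0:ℝ) ≤ (8:ℝ) ^ n),
              ENNReal.ofReal_mul hp0.le]
            ring
        _ = (X / v * v) * ENNReal.ofReal (r ^ n) := by
            rw [ENNReal.div_mul_cancel hv0 hvtop]
        _ = (X / v) * (ENNReal.ofReal (r ^ n) * v) := by ring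
        _ ≤ ENNReal.ofReal c * (ENNReal.ofReal (r ^ n) * v) := mul_le_mul_left hofc _
        _ ≤ ENNReal.ofReal c * Hn := mul_le_mul_right hHnlb _
    -- conclude
    set I : ℝ≥0∞ := choquetIntegral n δ B g with hI
    have hdp0 : Hd ^ p ≠ 0 := by
      simp [ENNReal.rpow_eq_zero_iff, hHd0, hHdtop, hp0, asymm]
    have hdptop : Hd ^ p ≠ ∞ := by
      simp [ENNReal.rpow_eq_top_iff, hHd0, hHdtop, hp0, asymm, not_lt.2 hp0.le]
    have hmain : ENNReal.ofReal p * I ^ p ≤ (ENNReal.ofReal c * I ^ p / Hd ^ p) * Hn := by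
      calc ENNReal.ofReal p * I ^ p
          = ENNReal.ofReal p * (Hd ^ p * (I ^ p / Hd ^ p)) := by
            rw [ENNReal.mul_div_cancel hdp0 hdptop]
        _ = (ENNReal.ofReal p * Hd ^ p) * (I ^ p / Hd ^ p) := by ring
        _ ≤ (ENNReal.ofReal c * Hn) * (I ^ p / Hd ^ p) := mul_le_mul_left hkey _
        _ = (ENNReal.ofReal c * I ^ p / Hd ^ p) * Hn := by
            rw [div_eq_mul_inv, div_eq_mul_inv]; ring
    calc ballAvg n (n:ℝ) F x r = choquetIntegral n (n:ℝ) B F / Hn := rfl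
      _ ≤ (ENNReal.ofReal p * I ^ p) / Hn := by
          refine ENNReal.div_le_div_right ?_ _
          exact Aux.core n hδ0 hδn F B
      _ ≤ ENNReal.ofReal c * I ^ p / Hd ^ p := (ENNReal.div_le_iff hHn0 hHntop).2 hmain
      _ = ENNReal.ofReal c * (I / Hd) ^ p := by
          rw [ENNReal.div_rpow_of_nonneg _ _ hp0.le, mul_div_assoc]
      _ = ENNReal.ofReal c * (ballAvg n δ g x r) ^ p := rfl
  refine ⟨hball, ?_⟩
  refine iSup₂_le fun r hr => ?_
  refine (hball r hr).trans ?_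
  refine mul_le_mul_right ?_ _
  refine ENNReal.rpow_le_rpow ?_ hp0.le
  exact le_iSup₂ (f := fun (r : ℝ) (_ : 0 < r) => ballAvg n δ g x r) r hr
end
end

section
/- Let n ≥ 1 and δ, δ' ∈ (0, n]. If f : ℝⁿ → [0, ∞] satisfies ∫_K f dH̃^δ_∞ < ∞ for every bounded set K ⊆ ℝⁿ, and f(x) = limsup_{r→0⁺} f^δ_{B(x,r)} for H̃^{δ'}_∞-almost every x ∈ ℝⁿ, then f is Lebesgue measurable. -/
open MeasureTheory Set Metric Filter Topology
open scoped ENNReal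

noncomputable section

namespace DyProof

/-- dyadic interval -/
def Iv (k m : ℤ) : Set ℝ := Ico ((m : ℝ) * 2 ^ k) (((m : ℝ) + 1) * 2 ^ k)

lemma Iv_nonempty (k m : ℤ) : (Iv k m).Nonempty := by
  refine ⟨(m : ℝ) * 2 ^ k, le_refl _, ?_⟩
  have : (0:ℝ) < 2 ^ k := zpow_pos (by norm_num) k
  nlinarith

lemma Iv_same_level {k a b : ℤ} {x : ℝ} (ha : x ∈ Iv k a) (hb : x ∈ Iv k b) : a = b := by
  have h2 : (0:ℝ) < 2 ^ k := zpow_pos (by norm_num) k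
  obtain ⟨ha1, ha2⟩ := ha
  obtain ⟨hb1, hb2⟩ := hb
  by_contra hne
  rcases lt_or_gt_of_ne hne with h | h
  · have : (a:ℝ) + 1 ≤ b := by exact_mod_cast h
    nlinarith
  · have : (b:ℝ) + 1 ≤ a := by exact_mod_cast h
    nlinarith

lemma Iv_subset_of_le {k k' m : ℤ} (h : k ≤ k') :
    Iv k m ⊆ Iv k' (m.ediv (2 ^ (k' - k).toNat)) := by
  set d : ℕ := (k' - k).toNat with hd
  have hkk : k' = k + d := by
    have := Int.toNat_of_nonneg (sub_nonneg.mpr h)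
    omega
  set D : ℤ := 2 ^ d with hD
  have hDpos : (0:ℤ) < D := by positivity
  have heq : D * (m.ediv D) + m.emod D = m := Int.mul_ediv_add_emod m D
  have hge : 0 ≤ m.emod D := Int.emod_nonneg m (ne_of_gt hDpos)
  have hlt : m.emod D < D := Int.emod_lt_of_pos m hDpos
  have hq : D * (m.ediv D) ≤ m := by omega
  have hq2 : m < D * (m.ediv D) + D := by omega
  intro x hx
  obtain ⟨h1, h2⟩ := hx
  have h2k : (0:ℝ) < 2 ^ k := zpow_pos (by norm_num) k
  have hDr : ((D : ℝ)) = 2 ^ (d:ℤ) := by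
    rw [hD]; push_cast; rw [zpow_natCast]
  have h2k' : (2:ℝ) ^ k' = (D:ℝ) * 2 ^ k := by
    rw [hkk, hDr, ← zpow_add₀ (by norm_num : (2:ℝ) ≠ 0)]
    ring_nf
  constructor
  · calc ((m.ediv D : ℤ) : ℝ) * 2 ^ k' = ((D * (m.ediv D) : ℤ) : ℝ) * 2 ^ k := by
          rw [h2k']; push_cast; ring
    _ ≤ (m:ℝ) * 2 ^ k := by
          have : ((D * (m.ediv D) : ℤ) : ℝ) ≤ (m : ℝ) := by exact_mod_cast hq
          nlinarith
    _ ≤ x := h1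
  · calc x < ((m:ℝ) + 1) * 2 ^ k := h2
    _ ≤ (((m.ediv D : ℤ) : ℝ) + 1) * 2 ^ k' := by
          rw [h2k']
          have : ((m : ℤ) : ℝ) + 1 ≤ ((D * (m.ediv D) + D : ℤ) : ℝ) := by exact_mod_cast hq2
          have hexp : (((m.ediv D : ℤ) : ℝ) + 1) * ((D:ℝ) * 2 ^ k)
              = ((D * (m.ediv D) + D : ℤ) : ℝ) * 2 ^ k := by push_cast; ring
          rw [hexp]
          nlinarith

lemma Iv_subset_or_disjoint {k k' m m' : ℤ} (h : k ≤ k') :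
    Iv k m ⊆ Iv k' m' ∨ Disjoint (Iv k m) (Iv k' m') := by
  by_cases he : m' = m.ediv (2 ^ (k' - k).toNat)
  · left; rw [he]; exact Iv_subset_of_le h
  · right
    rw [Set.disjoint_left]
    intro x hx hx'
    have h1 := Iv_subset_of_le (m := m) h hx
    exact he (Iv_same_level hx' h1)

lemma Iv_subset_le_level {k k' m m' : ℤ} (h : Iv k m ⊆ Iv k' m') : k ≤ k' := by
  have h2k : (0:ℝ) < 2 ^ k := zpow_pos (by norm_num) k
  have h2k' : (0:ℝ) < 2 ^ k' := zpow_pos (by norm_num) k'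
  have hne : (m:ℝ) * 2 ^ k < ((m:ℝ) + 1) * 2 ^ k := by nlinarith
  rw [Iv, Iv, Ico_subset_Ico_iff hne] at h
  obtain ⟨h1, h2⟩ := h
  have hlen : (2:ℝ) ^ k ≤ 2 ^ k' := by nlinarith
  by_contra hk
  push_neg at hk
  have := zpow_lt_zpow_right₀ (by norm_num : (1:ℝ) < 2) hk
  linarith

lemma Iv_subset_same_level {k m m' : ℤ} (h : Iv k m ⊆ Iv k m') : m = m' := by
  obtain ⟨x, hx⟩ := Iv_nonempty k m
  exact Iv_same_level hx (h hx)


abbrev Idx (n : ℕ) := ℤ × (Fin n → ℤ)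

def cube (n : ℕ) (q : Idx n) : Set (En n) := dyadicCube n q.1 q.2

lemma mem_cube {n : ℕ} {q : Idx n} {x : En n} :
    x ∈ cube n q ↔ ∀ i, x i ∈ Iv q.1 (q.2 i) := by
  constructor
  · intro h i; exact ⟨(h i).1, (h i).2⟩
  · intro h i; exact ⟨(h i).1, (h i).2⟩

lemma cube_nonempty {n : ℕ} (q : Idx n) : (cube n q).Nonempty := by
  refine ⟨WithLp.toLp 2 (fun i => ((q.2 i : ℝ) * 2 ^ q.1) : Fin n → ℝ), ?_⟩
  rw [mem_cube]
  intro i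
  have h2 : (0:ℝ) < 2 ^ q.1 := zpow_pos (by norm_num) q.1
  exact ⟨le_refl _, show ((q.2 i : ℝ) * 2 ^ q.1) < ((q.2 i : ℝ) + 1) * 2 ^ q.1 by nlinarith⟩

lemma cube_subset_coord {n : ℕ} {q q' : Idx n} (h : cube n q ⊆ cube n q') (i : Fin n) :
    Iv q.1 (q.2 i) ⊆ Iv q'.1 (q'.2 i) := by
  obtain ⟨x, hx⟩ := cube_nonempty q
  intro s hs
  classical
  set y : En n := WithLp.toLp 2 (fun j => if j = i then s else x j : Fin n → ℝ) with hy
  have hymem : y ∈ cube n q := by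
    rw [mem_cube]
    intro j
    by_cases hj : j = i
    · subst hj
      show (if j = j then s else x j) ∈ _
      rw [if_pos rfl]
      exact hs
    · show (if j = i then s else x j) ∈ _
      rw [if_neg hj]
      exact (mem_cube.mp hx) j
  have := (mem_cube.mp (h hymem)) i
  simpa [hy] using this

lemma cube_subset_level {n : ℕ} (hn : 0 < n) {q q' : Idx n} (h : cube n q ⊆ cube n q') :
    q.1 ≤ q'.1 :=
  Iv_subset_le_level (cube_subset_coord h ⟨0, hn⟩)

lemma cube_subset_or_disjoint {n : ℕ} {q q' : Idx n}
    (hne : (cube n q ∩ cube n q').Nonempty) :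
    cube n q ⊆ cube n q' ∨ cube n q' ⊆ cube n q := by
  obtain ⟨x, hx, hx'⟩ := hne
  rcases le_total q.1 q'.1 with h | h
  · left
    intro y hy
    rw [mem_cube]
    intro i
    rcases Iv_subset_or_disjoint (m := q.2 i) (m' := q'.2 i) h with hsub | hdis
    · exact hsub ((mem_cube.mp hy) i)
    · exact absurd ((mem_cube.mp hx') i)
        (Set.disjoint_left.mp hdis ((mem_cube.mp hx) i))
  · right
    intro y hy
    rw [mem_cube]
    intro i
    rcases Iv_subset_or_disjoint (m := q'.2 i) (m' := q.2 i) h with hsub | hdis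
    · exact hsub ((mem_cube.mp hy) i)
    · exact absurd ((mem_cube.mp hx) i)
        (Set.disjoint_left.mp hdis ((mem_cube.mp hx') i))

lemma cube_eq_of_subset_same_level {n : ℕ} {q q' : Idx n} (hL : q.1 = q'.1)
    (h : cube n q ⊆ cube n q') : q = q' := by
  obtain ⟨k, m⟩ := q
  obtain ⟨k', m'⟩ := q'
  simp only at hL
  subst hL
  have : m = m' := by
    funext i
    exact Iv_subset_same_level (cube_subset_coord h i)
  simp [this]

lemma cube_ssubset_level {n : ℕ} (hn : 0 < n) {q q' : Idx n} (h : cube n q ⊂ cube n q') :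
    q.1 < q'.1 := by
  have h1 := cube_subset_level hn h.subset
  rcases lt_or_eq_of_le h1 with h2 | h2
  · exact h2
  · exact absurd (cube_eq_of_subset_same_level h2 h.subset ▸ h.ne) (by simp)

lemma cube_inj {n : ℕ} (hn : 0 < n) {q q' : Idx n} (h : cube n q = cube n q') : q = q' := by
  have h1 := cube_subset_level hn h.le
  have h2 := cube_subset_level hn h.ge
  exact cube_eq_of_subset_same_level (le_antisymm h1 h2) h.le


/-! ### Weights, cost, set-indexed content -/

def w (n : ℕ) (δ : ℝ) (q : Idx n) : ℝ≥0∞ := ENNReal.ofReal (((2:ℝ) ^ q.1) ^ δ)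

lemma w_pos {n : ℕ} (δ : ℝ) (q : Idx n) : 0 < w n δ q := by
  rw [w]
  have : (0:ℝ) < ((2:ℝ) ^ q.1) ^ δ := Real.rpow_pos_of_pos (zpow_pos (by norm_num) _) _
  simpa [ENNReal.ofReal_pos] using this

lemma w_ne_top {n : ℕ} (δ : ℝ) (q : Idx n) : w n δ q ≠ ⊤ := ENNReal.ofReal_ne_top

lemma w_lt_of_level_lt {n : ℕ} {δ : ℝ} (hδ : 0 < δ) {q q' : Idx n} (h : q.1 < q'.1) :
    w n δ q < w n δ q' := by
  rw [w, w]
  have h1 : ((2:ℝ) ^ q.1) ^ δ < ((2:ℝ) ^ q'.1) ^ δ := by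
    apply Real.rpow_lt_rpow (le_of_lt (zpow_pos (by norm_num) _)) _ hδ
    exact zpow_lt_zpow_right₀ (by norm_num) h
  exact (ENNReal.ofReal_lt_ofReal_iff (lt_trans (Real.rpow_pos_of_pos (zpow_pos (by norm_num) _) _) h1)).mpr h1

/-- uniform level bound from a weight bound. -/
lemma exists_level_bound (n : ℕ) {δ : ℝ} (hδ : 0 < δ) (B : ℝ≥0∞) (hB : B ≠ ⊤) :
    ∃ K : ℤ, ∀ q : Idx n, w n δ q ≤ B → q.1 < K := by
  have h2δ : (1:ℝ) < (2:ℝ) ^ δ := by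
    rw [show (1:ℝ) = (2:ℝ) ^ (0:ℝ) by simp]
    exact Real.rpow_lt_rpow_of_exponent_lt (by norm_num) hδ
  obtain ⟨N, hN⟩ := pow_unbounded_of_one_lt (B.toReal) h2δ
  refine ⟨N, fun q hq => ?_⟩
  by_contra hk
  push_neg at hk
  have h1 : ((2:ℝ) ^ δ) ^ N = ((2:ℝ) ^ (N:ℤ)) ^ δ := by
    rw [zpow_natCast, ← Real.rpow_natCast ((2:ℝ)^δ) N, ← Real.rpow_natCast (2:ℝ) N,
      ← Real.rpow_mul (by norm_num), ← Real.rpow_mul (by norm_num), mul_comm]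
  have h2 : ((2:ℝ) ^ (N:ℤ)) ^ δ ≤ ((2:ℝ) ^ q.1) ^ δ := by
    apply Real.rpow_le_rpow (le_of_lt (zpow_pos (by norm_num) _)) _ (le_of_lt hδ)
    exact zpow_le_zpow_right₀ (by norm_num) hk
  have h3 : B < w n δ q := by
    rw [w, ENNReal.lt_ofReal_iff_toReal_lt hB]
    calc B.toReal < ((2:ℝ)^δ)^N := hN
    _ ≤ _ := h1 ▸ h2
  exact absurd hq (not_le.mpr h3)


def cost (n : ℕ) (δ : ℝ) (S : Set (Idx n)) : ℝ≥0∞ := ∑' q, S.indicator (w n δ) q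

lemma cost_mono {n : ℕ} {δ : ℝ} {S T : Set (Idx n)} (h : S ⊆ T) : cost n δ S ≤ cost n δ T :=
  ENNReal.tsum_le_tsum fun q => Set.indicator_le_indicator_of_subset h (fun _ => zero_le) q

lemma le_cost_of_mem {n : ℕ} {δ : ℝ} {S : Set (Idx n)} {q : Idx n} (h : q ∈ S) :
    w n δ q ≤ cost n δ S := by
  have := ENNReal.le_tsum (f := S.indicator (w n δ)) q
  rwa [Set.indicator_of_mem h] at this

lemma cost_union_le {n : ℕ} {δ : ℝ} (S T : Set (Idx n)) :
    cost n δ (S ∪ T) ≤ cost n δ S + cost n δ T := by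
  rw [cost, cost, cost, ← ENNReal.tsum_add]
  refine ENNReal.tsum_le_tsum fun q => ?_
  by_cases hS : q ∈ S
  · by_cases hT : q ∈ T
    · rw [Set.indicator_of_mem (Set.mem_union_left _ hS), Set.indicator_of_mem hS,
        Set.indicator_of_mem hT]
      exact le_add_right (le_refl _)
    · rw [Set.indicator_of_mem (Set.mem_union_left _ hS), Set.indicator_of_mem hS]
      exact le_add_right (le_refl _)
  · by_cases hT : q ∈ T
    · rw [Set.indicator_of_mem (Set.mem_union_right _ hT), Set.indicator_of_mem hT,
        Set.indicator_of_notMem hS]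
      exact le_add_left (le_refl _)
    · rw [Set.indicator_of_notMem hS, Set.indicator_of_notMem hT,
        Set.indicator_of_notMem (fun h => h.elim hS hT)]
      simp

lemma cost_eq_tsum_subtype {n : ℕ} (δ : ℝ) (S : Set (Idx n)) :
    cost n δ S = ∑' (q : S), w n δ q := (tsum_subtype S (w n δ)).symm

/-- set-indexed dyadic content -/
def sContent (n : ℕ) (δ : ℝ) (E : Set (En n)) : ℝ≥0∞ :=
  ⨅ (S : Set (Idx n)) (_ : S.Countable) (_ : E ⊆ interior (⋃ q ∈ S, cube n q)), cost n δ S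

lemma sContent_le {n : ℕ} {δ : ℝ} {E : Set (En n)} {S : Set (Idx n)} (hc : S.Countable)
    (hcov : E ⊆ interior (⋃ q ∈ S, cube n q)) : sContent n δ E ≤ cost n δ S := by
  refine le_trans (iInf_le _ S) ?_
  exact le_trans (iInf_le _ hc) (iInf_le _ hcov)

lemma sContent_mono {n : ℕ} {δ : ℝ} {E F : Set (En n)} (h : E ⊆ F) :
    sContent n δ E ≤ sContent n δ F := by
  refine le_iInf fun S => le_iInf fun hc => le_iInf fun hcov => ?_
  exact sContent_le hc (h.trans hcov)

lemma exists_sCover {n : ℕ} {δ : ℝ} {E : Set (En n)} {t : ℝ≥0∞} (h : sContent n δ E < t) :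
    ∃ S : Set (Idx n), S.Countable ∧ E ⊆ interior (⋃ q ∈ S, cube n q) ∧ cost n δ S < t := by
  rw [sContent] at h
  obtain ⟨S, hS⟩ := iInf_lt_iff.mp h
  obtain ⟨hc, hS2⟩ := iInf_lt_iff.mp hS
  obtain ⟨hcov, hS3⟩ := iInf_lt_iff.mp hS2
  exact ⟨S, hc, hcov, hS3⟩

/-- an infinite set of cubes of arbitrarily small total cost -/
lemma exists_small_infinite (n : ℕ) {δ : ℝ} (hδ : 0 < δ) {ε : ℝ} (hε : 0 < ε) :
    ∃ T : Set (Idx n), T.Infinite ∧ T.Countable ∧ cost n δ T ≤ ENNReal.ofReal ε := by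
  set r : ℝ := (2:ℝ)⁻¹ ^ δ with hr
  have hr0 : 0 < r := Real.rpow_pos_of_pos (by norm_num) _
  have hr1 : r < 1 := Real.rpow_lt_one (by norm_num) (by norm_num) hδ
  -- choose J with r^(J+1) * (1-r)⁻¹ ≤ ε
  have htend : Filter.Tendsto (fun J : ℕ => r ^ (J+1) * (1-r)⁻¹) Filter.atTop (nhds 0) := by
    have h1 : Filter.Tendsto (fun J : ℕ => r ^ (J+1)) Filter.atTop (nhds 0) :=
      (tendsto_pow_atTop_nhds_zero_of_lt_one (le_of_lt hr0) hr1).comp (Filter.tendsto_add_atTop_nat 1)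
    simpa using h1.mul_const (1-r)⁻¹
  obtain ⟨J, hJ⟩ := (htend.eventually (eventually_le_nhds hε)).exists
  -- tiny cubes
  set tiny : ℕ → Idx n := fun i => (-(J:ℤ)-1-i, fun _ => 0) with htiny
  have htinj : Function.Injective tiny := by
    intro a b hab
    have := congrArg Prod.fst hab
    simp only [htiny] at this
    omega
  refine ⟨Set.range tiny, Set.infinite_range_of_injective htinj, Set.countable_range _, ?_⟩
  have hwt : ∀ i, w n δ (tiny i) = ENNReal.ofReal (r ^ (J+1) * r ^ i) := by
    intro i
    rw [w]
    congr 1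
    have hz : (2:ℝ) ^ (-(J:ℤ)-1-i) = (2:ℝ)⁻¹ ^ ((J+1+i : ℕ) : ℝ) := by
      rw [Real.rpow_natCast, inv_pow, ← zpow_natCast (2:ℝ), ← zpow_neg]
      congr 1
      push_cast
      ring
    rw [hz, ← Real.rpow_mul (by norm_num : (0:ℝ) ≤ 2⁻¹)]
    rw [hr, ← Real.rpow_natCast ((2:ℝ)⁻¹^δ) (J+1), ← Real.rpow_natCast ((2:ℝ)⁻¹^δ) i,
      ← Real.rpow_mul (by norm_num), ← Real.rpow_mul (by norm_num),
      ← Real.rpow_add (by norm_num : (0:ℝ) < 2⁻¹)]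
    congr 1
    push_cast; ring
  have hcost : cost n δ (Set.range tiny) ≤ ∑' i, w n δ (tiny i) := by
    rw [cost_eq_tsum_subtype]
    set g : Set.range tiny → ℕ := Set.rangeSplitting tiny with hg
    have hginj : Function.Injective g := by
      intro a b hab
      have ha := Set.apply_rangeSplitting tiny a
      have hb := Set.apply_rangeSplitting tiny b
      apply Subtype.ext
      rw [← ha, ← hb, hg] at *
      rw [hab]
    have := ENNReal.tsum_comp_le_tsum_of_injective hginj (fun i => w n δ (tiny i))
    refine le_trans (le_of_eq ?_) this
    apply tsum_congr
    intro q
    congr 1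
    exact (Set.apply_rangeSplitting tiny q).symm
  refine le_trans hcost ?_
  have : ∑' i, w n δ (tiny i) = ENNReal.ofReal (r^(J+1)) * ∑' i, ENNReal.ofReal (r^i) := by
    rw [← ENNReal.tsum_mul_left]
    apply tsum_congr
    intro i
    rw [hwt i, ENNReal.ofReal_mul (by positivity)]
  rw [this]
  have hgeom : ∑' i, ENNReal.ofReal (r^i) = ENNReal.ofReal ((1-r)⁻¹) := by
    have h1 : ∀ i : ℕ, ENNReal.ofReal (r^i) = (ENNReal.ofReal r) ^ i := by
      intro i
      rw [ENNReal.ofReal_pow (le_of_lt hr0)]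
    simp_rw [h1]
    rw [ENNReal.tsum_geometric]
    rw [← ENNReal.ofReal_one, ← ENNReal.ofReal_sub _ (le_of_lt hr0)]
    rw [ENNReal.ofReal_inv_of_pos (by linarith)]
  rw [hgeom, ← ENNReal.ofReal_mul (by positivity)]
  exact ENNReal.ofReal_le_ofReal hJ


lemma cost_range_le {n : ℕ} (δ : ℝ) (c : ℕ → Idx n) :
    cost n δ (Set.range c) ≤ ∑' i, w n δ (c i) := by
  rw [cost_eq_tsum_subtype]
  have hginj : Function.Injective (Set.rangeSplitting c) := by
    intro a b hab
    have ha := Set.apply_rangeSplitting c a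
    have hb := Set.apply_rangeSplitting c b
    apply Subtype.ext
    rw [← ha, ← hb, hab]
  have := ENNReal.tsum_comp_le_tsum_of_injective hginj (fun i => w n δ (c i))
  refine le_trans (le_of_eq ?_) this
  apply tsum_congr
  intro q
  congr 1
  exact (Set.apply_rangeSplitting c q).symm

lemma sContent_le_dyadicContent (n : ℕ) (δ : ℝ) (E : Set (En n)) :
    sContent n δ E ≤ dyadicContent n δ E := by
  rw [dyadicContent]
  refine le_iInf fun c => le_iInf fun hcov => ?_
  have hcov' : E ⊆ interior (⋃ q ∈ Set.range c, cube n q) := by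
    rwa [Set.biUnion_range]
  exact le_trans (sContent_le (Set.countable_range c) hcov') (cost_range_le δ c)

lemma dyadicContent_le_cost {n : ℕ} {δ : ℝ} (hδ : 0 < δ) {E : Set (En n)}
    {S : Set (Idx n)} (hc : S.Countable) (hcov : E ⊆ interior (⋃ q ∈ S, cube n q))
    {ε : ℝ} (hε : 0 < ε) :
    dyadicContent n δ E ≤ cost n δ S + ENNReal.ofReal ε := by
  obtain ⟨T, hTinf, hTc, hTcost⟩ := exists_small_infinite n hδ hε
  set S' : Set (Idx n) := S ∪ T with hS'
  have hS'c : S'.Countable := hc.union hTc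
  have hS'inf : S'.Infinite := hTinf.mono Set.subset_union_right
  haveI : Countable ↥S' := hS'c.to_subtype
  haveI : Infinite ↥S' := Set.infinite_coe_iff.mpr hS'inf
  haveI : Encodable ↥S' := Encodable.ofCountable _
  haveI : Denumerable ↥S' := Denumerable.ofEncodableOfInfinite _
  set e : ↥S' ≃ ℕ := Denumerable.eqv ↥S' with he
  set c : ℕ → Idx n := fun i => ((e.symm i : ↥S') : Idx n) with hce
  have hsurj : Function.Surjective (fun i => (e.symm i : ↥S')) := e.symm.surjective
  have hUnion : (⋃ i, cube n (c i)) = ⋃ q ∈ S', cube n q := by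
    have h1 : (⋃ i, cube n (c i)) = ⋃ (q : ↥S'), cube n (q : Idx n) :=
      hsurj.iUnion_comp (fun q => cube n (q : Idx n))
    rw [h1, Set.iUnion_coe_set]
  have hcov' : E ⊆ interior (⋃ i, cube n (c i)) := by
    rw [hUnion]
    refine hcov.trans (interior_mono ?_)
    exact Set.biUnion_subset_biUnion_left Set.subset_union_left
  have hsum : ∑' i, w n δ (c i) = cost n δ S' := by
    rw [cost_eq_tsum_subtype]
    exact e.symm.tsum_eq (fun q => w n δ (q : Idx n))
  calc dyadicContent n δ E ≤ ∑' i, w n δ (c i) := by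
        rw [dyadicContent]
        exact iInf_le_of_le c (iInf_le_of_le hcov' (le_refl _))
  _ = cost n δ S' := hsum
  _ ≤ cost n δ S + cost n δ T := cost_union_le S T
  _ ≤ cost n δ S + ENNReal.ofReal ε := add_le_add_right hTcost _

lemma dyadicContent_eq {n : ℕ} {δ : ℝ} (hδ : 0 < δ) (E : Set (En n)) :
    dyadicContent n δ E = sContent n δ E := by
  refine le_antisymm ?_ (sContent_le_dyadicContent n δ E)
  have key : ∀ ε : ℝ, 0 < ε → dyadicContent n δ E ≤ sContent n δ E + ENNReal.ofReal ε := by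
    intro ε hε
    by_cases htop : sContent n δ E = ⊤
    · rw [htop]; simp
    · have hlt : sContent n δ E < sContent n δ E + ENNReal.ofReal (ε/2) := by
        apply ENNReal.lt_add_right htop
        simp [ENNReal.ofReal_eq_zero]
        linarith
      obtain ⟨S, hc, hcov, hcost⟩ := exists_sCover hlt
      calc dyadicContent n δ E ≤ cost n δ S + ENNReal.ofReal (ε/2) :=
            dyadicContent_le_cost hδ hc hcov (by linarith)
      _ ≤ sContent n δ E + ENNReal.ofReal (ε/2) + ENNReal.ofReal (ε/2) :=
            add_le_add_left (le_of_lt hcost) _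
      _ = sContent n δ E + ENNReal.ofReal ε := by
            rw [add_assoc, ← ENNReal.ofReal_add (by linarith) (by linarith)]
            norm_num
  apply ENNReal.le_of_forall_pos_le_add
  intro ε hε _
  have := key ε (by exact_mod_cast hε)
  rwa [ENNReal.ofReal_coe_nnreal] at this


/-! ### Maximal cubes and the strong subadditivity step -/

def maxl (n : ℕ) (S : Set (Idx n)) : Set (Idx n) :=
  {q | q ∈ S ∧ ¬∃ q' ∈ S, cube n q ⊂ cube n q'}

lemma maxl_subset (n : ℕ) (S : Set (Idx n)) : maxl n S ⊆ S := fun _ h => h.1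

lemma exists_maxl {n : ℕ} (hn : 0 < n) {S : Set (Idx n)} {K : ℤ}
    (hK : ∀ q ∈ S, q.1 < K) :
    ∀ q ∈ S, ∃ p ∈ maxl n S, cube n q ⊆ cube n p := by
  have main : ∀ N : ℕ, ∀ q ∈ S, (K - q.1).toNat ≤ N → ∃ p ∈ maxl n S, cube n q ⊆ cube n p := by
    intro N
    induction N with
    | zero =>
      intro q hq h0
      have h1 := hK q hq
      omega
    | succ N ih =>
      intro q hq hle
      by_cases hmax : ∃ q' ∈ S, cube n q ⊂ cube n q'
      · obtain ⟨q', hq', hsub⟩ := hmax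
        have hlvl := cube_ssubset_level hn hsub
        have hK' := hK q' hq'
        obtain ⟨p, hp, hsub2⟩ := ih q' hq' (by omega)
        exact ⟨p, hp, hsub.subset.trans hsub2⟩
      · exact ⟨q, ⟨hq, hmax⟩, subset_rfl⟩
  intro q hq
  exact main ((K - q.1).toNat) q hq le_rfl

lemma maxl_biUnion {n : ℕ} (hn : 0 < n) {S : Set (Idx n)} {K : ℤ}
    (hK : ∀ q ∈ S, q.1 < K) :
    ⋃ q ∈ maxl n S, cube n q = ⋃ q ∈ S, cube n q := by
  apply Set.Subset.antisymm
  · exact Set.biUnion_subset_biUnion_left (maxl_subset n S)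
  · intro x hx
    obtain ⟨q, hq, hxq⟩ := Set.mem_iUnion₂.mp hx
    obtain ⟨p, hp, hsub⟩ := exists_maxl hn hK q hq
    exact Set.mem_iUnion₂.mpr ⟨p, hp, hsub hxq⟩

/-- the "intersection family" in the strong subadditivity argument -/
def ssaI (n : ℕ) (X Y : Set (Idx n)) : Set (Idx n) :=
  {q | q ∈ X ∧ ∃ q' ∈ Y, cube n q ⊆ cube n q'} ∪
  {q | q ∈ Y ∧ ∃ q' ∈ X, cube n q ⊂ cube n q'}

lemma ssaI_subset (n : ℕ) (X Y : Set (Idx n)) : ssaI n X Y ⊆ X ∪ Y := by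
  intro q hq
  rcases hq with h | h
  · exact Or.inl h.1
  · exact Or.inr h.1

lemma indicator_le_w {n : ℕ} (δ : ℝ) (S : Set (Idx n)) (q : Idx n) :
    S.indicator (w n δ) q ≤ w n δ q :=
  Set.indicator_le_self S (w n δ) q

lemma ssa_cost {n : ℕ} (hn : 0 < n) (δ : ℝ) (X Y : Set (Idx n)) :
    cost n δ (maxl n (X ∪ Y)) + cost n δ (ssaI n X Y) ≤ cost n δ X + cost n δ Y := by
  rw [cost, cost, cost, cost, ← ENNReal.tsum_add, ← ENNReal.tsum_add]
  refine ENNReal.tsum_le_tsum fun q => ?_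
  by_cases hX : q ∈ X
  · by_cases hY : q ∈ Y
    · rw [Set.indicator_of_mem hX, Set.indicator_of_mem hY]
      exact add_le_add (indicator_le_w δ _ q) (indicator_le_w δ _ q)
    · -- q ∈ X \ Y : show not both in maxl and ssaI
      have hnb : ¬(q ∈ maxl n (X ∪ Y) ∧ q ∈ ssaI n X Y) := by
        rintro ⟨hU, hI⟩
        rcases hI with h | h
        · obtain ⟨q', hq', hsub⟩ := h.2
          rcases eq_or_ne q q' with rfl | hne
          · exact hY hq'
          · exact hU.2 ⟨q', Or.inr hq', hsub.ssubset_of_ne (fun he => hne (cube_inj hn he))⟩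
        · exact hY h.1
      rw [Set.indicator_of_mem hX, Set.indicator_of_notMem hY, add_zero]
      by_cases hU : q ∈ maxl n (X ∪ Y)
      · rw [Set.indicator_of_mem hU, Set.indicator_of_notMem (fun hI => hnb ⟨hU, hI⟩), add_zero]
      · rw [Set.indicator_of_notMem hU, zero_add]
        exact indicator_le_w δ _ q
  · by_cases hY : q ∈ Y
    · have hnb : ¬(q ∈ maxl n (X ∪ Y) ∧ q ∈ ssaI n X Y) := by
        rintro ⟨hU, hI⟩
        rcases hI with h | h
        · exact hX h.1
        · obtain ⟨q', hq', hsub⟩ := h.2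
          exact hU.2 ⟨q', Or.inl hq', hsub⟩
      rw [Set.indicator_of_notMem hX, Set.indicator_of_mem hY, zero_add]
      by_cases hU : q ∈ maxl n (X ∪ Y)
      · rw [Set.indicator_of_mem hU, Set.indicator_of_notMem (fun hI => hnb ⟨hU, hI⟩), add_zero]
      · rw [Set.indicator_of_notMem hU, zero_add]
        exact indicator_le_w δ _ q
    · have h1 : q ∉ maxl n (X ∪ Y) := fun h => ((maxl_subset n (X ∪ Y)) h).elim hX hY
      have h2 : q ∉ ssaI n X Y := fun h => (ssaI_subset n X Y h).elim hX hY
      rw [Set.indicator_of_notMem hX, Set.indicator_of_notMem hY,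
        Set.indicator_of_notMem h1, Set.indicator_of_notMem h2]

lemma ssa_inter {n : ℕ} (X Y : Set (Idx n)) :
    (⋃ q ∈ X, cube n q) ∩ (⋃ q ∈ Y, cube n q) ⊆ ⋃ q ∈ ssaI n X Y, cube n q := by
  rintro x ⟨hx1, hx2⟩
  obtain ⟨qx, hqx, hxqx⟩ := Set.mem_iUnion₂.mp hx1
  obtain ⟨qy, hqy, hxqy⟩ := Set.mem_iUnion₂.mp hx2
  rcases cube_subset_or_disjoint ⟨x, hxqx, hxqy⟩ with h | h
  · exact Set.mem_iUnion₂.mpr ⟨qx, Or.inl ⟨hqx, qy, hqy, h⟩, hxqx⟩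
  · rcases eq_or_ne (cube n qy) (cube n qx) with he | hne
    · exact Set.mem_iUnion₂.mpr ⟨qx, Or.inl ⟨hqx, qy, hqy, he.ge⟩, hxqx⟩
    · exact Set.mem_iUnion₂.mpr ⟨qy, Or.inr ⟨hqy, qx, hqx, h.ssubset_of_ne hne⟩, hxqy⟩

lemma ssa_inter_interior {n : ℕ} (X Y : Set (Idx n)) :
    interior (⋃ q ∈ X, cube n q) ∩ interior (⋃ q ∈ Y, cube n q) ⊆
      interior (⋃ q ∈ ssaI n X Y, cube n q) := by
  rw [← interior_inter]
  exact interior_mono (ssa_inter X Y)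


/-! ### Continuity from below -/

lemma geom_sum_le_one (m : ℕ) : ∑ i ∈ Finset.range m, (2⁻¹ : ℝ≥0∞) ^ (i+1) ≤ 1 := by
  have h1 : ∑ i ∈ Finset.range m, (2⁻¹ : ℝ≥0∞) ^ (i+1) ≤ ∑' i, (2⁻¹ : ℝ≥0∞) ^ (i+1) :=
    ENNReal.sum_le_tsum _
  refine h1.trans ?_
  have h2 : ∑' i, (2⁻¹ : ℝ≥0∞) ^ (i+1) = 2⁻¹ * ∑' i, (2⁻¹ : ℝ≥0∞) ^ i := by
    rw [← ENNReal.tsum_mul_left]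
    exact tsum_congr fun i => (pow_succ' _ _)
  rw [h2, ENNReal.tsum_geometric]
  have h3 : (1 - 2⁻¹ : ℝ≥0∞) = 2⁻¹ := ENNReal.one_sub_inv_two
  rw [h3, inv_inv]
  rw [ENNReal.inv_mul_cancel (by norm_num) (by norm_num)]

theorem sContent_iUnion_le {n : ℕ} (hn : 0 < n) {δ : ℝ} (hδ : 0 < δ)
    {E : ℕ → Set (En n)} (hmono : ∀ j, E j ⊆ E (j+1)) :
    sContent n δ (⋃ j, E j) ≤ ⨆ j, sContent n δ (E j) := by
  classical
  set M := ⨆ j, sContent n δ (E j) with hM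
  by_cases hMtop : M = ⊤
  · rw [hMtop]; exact le_top
  apply ENNReal.le_of_forall_pos_le_add
  intro ε hε _
  have hεne : (ε : ℝ≥0∞) ≠ 0 := by exact_mod_cast hε.ne'
  set c : ℕ → ℝ≥0∞ := fun j => (ε : ℝ≥0∞) * 2⁻¹ ^ (j+1) with hc
  have hcpos : ∀ j, c j ≠ 0 := fun j =>
    mul_ne_zero hεne (pow_ne_zero _ (by norm_num))
  have hcsum : ∀ j, ∑ i ∈ Finset.range (j+1), c i ≤ (ε : ℝ≥0∞) := by
    intro j
    rw [hc, ← Finset.mul_sum]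
    calc (ε : ℝ≥0∞) * ∑ i ∈ Finset.range (j+1), (2⁻¹:ℝ≥0∞) ^ (i+1)
        ≤ (ε : ℝ≥0∞) * 1 := mul_le_mul_right (geom_sum_le_one _) _
    _ = ε := mul_one _
  have hcle : ∀ j, c j ≤ (ε : ℝ≥0∞) := by
    intro j
    have := hcsum j
    refine le_trans ?_ this
    exact Finset.single_le_sum (f := c) (fun i _ => zero_le) (Finset.self_mem_range_succ j)
  have hEle : ∀ j, sContent n δ (E j) ≤ M := fun j => le_iSup (fun j => sContent n δ (E j)) j
  have hEne : ∀ j, sContent n δ (E j) ≠ ⊤ := fun j => fun h => hMtop (top_le_iff.mp (h ▸ hEle j))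
  -- near-optimal covers
  have hcover : ∀ j, ∃ S : Set (Idx n), S.Countable ∧
      E j ⊆ interior (⋃ q ∈ S, cube n q) ∧ cost n δ S ≤ sContent n δ (E j) + c j := by
    intro j
    have hlt : sContent n δ (E j) < sContent n δ (E j) + c j :=
      ENNReal.lt_add_right (hEne j) (hcpos j)
    obtain ⟨S, h1, h2, h3⟩ := exists_sCover hlt
    exact ⟨S, h1, h2, le_of_lt h3⟩
  choose S hSc hScov hScost using hcover
  have hcost_le : ∀ j, cost n δ (S j) ≤ M + ε :=
    fun j => (hScost j).trans (add_le_add (hEle j) (hcle j))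
  obtain ⟨K, hK⟩ := exists_level_bound n hδ (M + ε)
    (ENNReal.add_ne_top.mpr ⟨hMtop, ENNReal.coe_ne_top⟩)
  have hSK : ∀ j, ∀ q ∈ S j, q.1 < K :=
    fun j q hq => hK q ((le_cost_of_mem hq).trans (hcost_le j))
  -- recursive sequence of covers
  set U : ℕ → Set (Idx n) :=
    fun j => Nat.rec (maxl n (S 0)) (fun j Uj => maxl n (Uj ∪ S (j+1))) j with hUdef
  have hU0 : U 0 = maxl n (S 0) := rfl
  have hUsucc : ∀ j, U (j+1) = maxl n (U j ∪ S (j+1)) := fun j => rfl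
  have hUK : ∀ j, ∀ q ∈ U j, q.1 < K := by
    intro j
    induction j with
    | zero => exact fun q hq => hSK 0 q (maxl_subset _ _ hq)
    | succ j ih =>
      intro q hq
      rcases maxl_subset _ _ hq with h | h
      · exact ih q h
      · exact hSK _ q h
  have hUKunion : ∀ j, ∀ q ∈ U j ∪ S (j+1), q.1 < K := by
    rintro j q (h | h)
    · exact hUK j q h
    · exact hSK _ q h
  have hUc : ∀ j, (U j).Countable := by
    intro j
    induction j with
    | zero => exact (hSc 0).mono (maxl_subset _ _)
    | succ j ih => exact ((ih.union (hSc (j+1))).mono (maxl_subset _ _))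
  have hUcov : ∀ j, E j ⊆ interior (⋃ q ∈ U j, cube n q) := by
    intro j
    induction j with
    | zero => rw [hU0, maxl_biUnion hn (hSK 0)]; exact hScov 0
    | succ j ih =>
      rw [hUsucc, maxl_biUnion hn (hUKunion j)]
      refine (hScov (j+1)).trans (interior_mono ?_)
      rw [Set.biUnion_union]
      exact Set.subset_union_right
  have hUcubes_mono : ∀ j, (⋃ q ∈ U j, cube n q) ⊆ ⋃ q ∈ U (j+1), cube n q := by
    intro j
    rw [hUsucc, maxl_biUnion hn (hUKunion j), Set.biUnion_union]
    exact Set.subset_union_left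
  have hUcost : ∀ j, cost n δ (U j) ≤ sContent n δ (E j) + ∑ i ∈ Finset.range (j+1), c i := by
    intro j
    induction j with
    | zero =>
      rw [hU0, Finset.sum_range_one]
      exact (cost_mono (maxl_subset _ _)).trans (hScost 0)
    | succ j ih =>
      have hIcov : E j ⊆ interior (⋃ q ∈ ssaI n (U j) (S (j+1)), cube n q) := by
        refine Set.subset_inter (hUcov j) ((hmono j).trans (hScov (j+1))) |>.trans ?_
        exact ssa_inter_interior _ _
      have hIc : (ssaI n (U j) (S (j+1))).Countable :=
        ((hUc j).union (hSc (j+1))).mono (ssaI_subset _ _ _)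
      have hIle : sContent n δ (E j) ≤ cost n δ (ssaI n (U j) (S (j+1))) :=
        sContent_le hIc hIcov
      have hssa := ssa_cost hn δ (U j) (S (j+1))
      rw [← hUsucc] at hssa
      have key : cost n δ (U (j+1)) + sContent n δ (E j) ≤
          (sContent n δ (E (j+1)) + ∑ i ∈ Finset.range (j+2), c i) + sContent n δ (E j) := by
        calc cost n δ (U (j+1)) + sContent n δ (E j)
            ≤ cost n δ (U (j+1)) + cost n δ (ssaI n (U j) (S (j+1))) :=
              add_le_add_right hIle _
        _ ≤ cost n δ (U j) + cost n δ (S (j+1)) := hssa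
        _ ≤ (sContent n δ (E j) + ∑ i ∈ Finset.range (j+1), c i) +
              (sContent n δ (E (j+1)) + c (j+1)) := add_le_add ih (hScost (j+1))
        _ = (sContent n δ (E (j+1)) + ∑ i ∈ Finset.range (j+2), c i) + sContent n δ (E j) := by
              rw [Finset.sum_range_succ c (j+1)]
              ring
      exact (ENNReal.add_le_add_iff_right (hEne j)).mp key
  -- the limit family
  set D : Set (Idx n) := {q | ∃ j0, ∀ j, j0 ≤ j → q ∈ U j} with hD
  have hDc : D.Countable := by
    refine (Set.countable_iUnion hUc).mono ?_
    rintro q ⟨j0, hj0⟩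
    exact Set.mem_iUnion.mpr ⟨j0, hj0 j0 le_rfl⟩
  -- descend: find the step where a cube is dropped
  have hfind : ∀ (q : Idx n) (jj i : ℕ), jj ≤ i → q ∈ U jj → q ∉ U i →
      ∃ i', jj ≤ i' ∧ q ∈ U i' ∧ q ∉ U (i'+1) := by
    intro q jj i hle hin hout
    by_contra hcon
    push_neg at hcon
    have hstep : ∀ k, q ∈ U (jj + k) := by
      intro k
      induction k with
      | zero => exact hin
      | succ k ih =>
        have := hcon (jj + k) (Nat.le_add_right _ _)
        by_contra hq
        exact hq (by_contra fun h2 => h2 (this ih)) |>.elim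
    have := hstep (i - jj)
    rw [Nat.add_sub_cancel' hle] at this
    exact hout this
  have habsorb : ∀ j, ∀ q ∈ U j, ∃ p ∈ D, cube n q ⊆ cube n p := by
    have main : ∀ N : ℕ, ∀ j : ℕ, ∀ q : Idx n, q ∈ U j → (K - q.1).toNat ≤ N →
        ∃ p ∈ D, cube n q ⊆ cube n p := by
      intro N
      induction N with
      | zero =>
        intro j q hq h0
        have := hUK j q hq
        omega
      | succ N ih =>
        intro j q hq hle
        by_cases hst : ∀ i, j ≤ i → q ∈ U i
        · exact ⟨q, ⟨j, hst⟩, subset_rfl⟩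
        · push_neg at hst
          obtain ⟨i, hij, hqi⟩ := hst
          obtain ⟨i', hii', hqin, hqout⟩ := hfind q j i hij hq hqi
          rw [hUsucc] at hqout
          have hqarg : q ∈ U i' ∪ S (i'+1) := Or.inl hqin
          have hnmax : ∃ q' ∈ U i' ∪ S (i'+1), cube n q ⊂ cube n q' := by
            by_contra hcon
            exact hqout ⟨hqarg, hcon⟩
          obtain ⟨q', hq', hsub⟩ := hnmax
          obtain ⟨p', hp', hsubp⟩ := exists_maxl hn (hUKunion i') q' hq'
          rw [← hUsucc] at hp'
          have hss : cube n q ⊂ cube n p' := hsub.trans_subset hsubp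
          have hlvl := cube_ssubset_level hn hss
          have hKp := hUK (i'+1) p' hp'
          obtain ⟨p, hp, hsubfin⟩ := ih (i'+1) p' hp' (by omega)
          exact ⟨p, hp, hss.subset.trans hsubfin⟩
    intro j q hq
    exact main ((K - q.1).toNat) j q hq le_rfl
  have hDcov : (⋃ j, E j) ⊆ interior (⋃ q ∈ D, cube n q) := by
    intro x hx
    obtain ⟨j, hj⟩ := Set.mem_iUnion.mp hx
    refine interior_mono ?_ (hUcov j hj)
    intro y hy
    obtain ⟨q, hq, hyq⟩ := Set.mem_iUnion₂.mp hy
    obtain ⟨p, hp, hsub⟩ := habsorb j q hq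
    exact Set.mem_iUnion₂.mpr ⟨p, hp, hsub hyq⟩
  have hDcost : cost n δ D ≤ M + ε := by
    rw [cost, ENNReal.tsum_eq_iSup_sum]
    refine iSup_le fun F => ?_
    have hsum : ∑ q ∈ F, D.indicator (w n δ) q = ∑ q ∈ F.filter (· ∈ D), w n δ q := by
      rw [Finset.sum_filter]
      exact Finset.sum_congr rfl fun q _ => by
        by_cases hq : q ∈ D
        · rw [Set.indicator_of_mem hq, if_pos hq]
        · rw [Set.indicator_of_notMem hq, if_neg hq]
    rw [hsum]
    set j0 : Idx n → ℕ := fun q => if h : q ∈ D then Classical.choose h else 0 with hj0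
    have hj0spec : ∀ q ∈ D, ∀ j, j0 q ≤ j → q ∈ U j := by
      intro q hq j hj
      have := Classical.choose_spec hq
      rw [hj0] at hj
      simp only [dif_pos hq] at hj
      exact this j hj
    set jstar := (F.filter (· ∈ D)).sup j0 with hjstar
    have hsub : ∀ q ∈ F.filter (· ∈ D), q ∈ U jstar := by
      intro q hq
      have hqD : q ∈ D := (Finset.mem_filter.mp hq).2
      exact hj0spec q hqD jstar (Finset.le_sup hq)
    calc ∑ q ∈ F.filter (· ∈ D), w n δ q
        = ∑ q ∈ F.filter (· ∈ D), (U jstar).indicator (w n δ) q := by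
          exact Finset.sum_congr rfl fun q hq => (Set.indicator_of_mem (hsub q hq) _).symm
    _ ≤ cost n δ (U jstar) := ENNReal.sum_le_tsum _
    _ ≤ sContent n δ (E jstar) + ∑ i ∈ Finset.range (jstar+1), c i := hUcost jstar
    _ ≤ M + ε := add_le_add (hEle jstar) (hcsum jstar)
  exact (sContent_le hDc hDcov).trans hDcost


/-! ### Volume comparisons -/

lemma abs_coord_le_norm {n : ℕ} (x : En n) (i : Fin n) : |x i| ≤ ‖x‖ := by
  rw [EuclideanSpace.norm_eq]
  have h1 : |x i| = Real.sqrt (‖x i‖ ^ 2) := by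
    rw [Real.norm_eq_abs, Real.sqrt_sq_eq_abs, abs_abs]
  rw [h1]
  apply Real.sqrt_le_sqrt
  exact Finset.single_le_sum (f := fun j => ‖x j‖ ^ 2) (fun j _ => sq_nonneg _)
    (Finset.mem_univ i)

lemma volume_cube {n : ℕ} (q : Idx n) :
    (volume : Measure (En n)) (cube n q) = ENNReal.ofReal ((2:ℝ) ^ q.1) ^ n := by
  have hmp := EuclideanSpace.volume_preserving_symm_measurableEquiv_toLp (Fin n)
  have hset : cube n q = (MeasurableEquiv.toLp 2 (Fin n → ℝ)).symm ⁻¹'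
      (Set.univ.pi fun i => Ico ((q.2 i : ℝ) * 2 ^ q.1) (((q.2 i : ℝ) + 1) * 2 ^ q.1)) := by
    ext x
    simp only [cube, dyadicCube, Set.mem_setOf_eq, Set.mem_preimage, Set.mem_pi,
      Set.mem_univ, forall_true_left, Set.mem_Ico]
    rfl
  rw [hset, hmp.measure_preimage
    (MeasurableSet.univ_pi (fun i => measurableSet_Ico)).nullMeasurableSet]
  rw [volume_pi_pi]
  have hv : ∀ i : Fin n,
      volume (Ico ((q.2 i : ℝ) * 2 ^ q.1) (((q.2 i : ℝ) + 1) * 2 ^ q.1))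
        = ENNReal.ofReal ((2:ℝ) ^ q.1) := by
    intro i
    rw [Real.volume_Ico]
    congr 1
    ring
  rw [Finset.prod_congr rfl (fun i _ => hv i), Finset.prod_const, Finset.card_univ,
    Fintype.card_fin]

lemma volume_cube_le_w {n : ℕ} {σ : ℝ} (hσ : 0 < σ) (hσn : σ ≤ n) {q : Idx n}
    (hq : (2:ℝ) ^ q.1 ≤ 1) :
    (volume : Measure (En n)) (cube n q) ≤ w n σ q := by
  rw [volume_cube, w]
  have h2 : (0:ℝ) < 2 ^ q.1 := zpow_pos (by norm_num) _
  rw [← ENNReal.ofReal_pow (le_of_lt h2)]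
  apply ENNReal.ofReal_le_ofReal
  rw [← Real.rpow_natCast ((2:ℝ) ^ q.1) n]
  exact Real.rpow_le_rpow_of_exponent_ge h2 hq hσn

lemma volume_eq_zero_of_sContent_eq_zero {n : ℕ} {σ : ℝ} (hσ : 0 < σ) (hσn : σ ≤ (n:ℝ))
    {E : Set (En n)} (h : sContent n σ E = 0) : (volume : Measure (En n)) E = 0 := by
  have key : ∀ ε : NNReal, 0 < ε → (volume : Measure (En n)) E ≤ ε := by
    intro ε hε
    have hmin : (0:ℝ≥0∞) < min (ε : ℝ≥0∞) 1 :=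
      lt_min (by exact_mod_cast hε) zero_lt_one
    obtain ⟨S, hSc, hScov, hScost⟩ := exists_sCover (h ▸ hmin : sContent n σ E < min (ε:ℝ≥0∞) 1)
    have hcost1 : cost n σ S ≤ 1 := (le_of_lt hScost).trans (min_le_right _ _)
    have hsmall : ∀ q ∈ S, (2:ℝ) ^ q.1 ≤ 1 := by
      intro q hq
      by_contra hbig
      push_neg at hbig
      have h1 : (1:ℝ) < ((2:ℝ) ^ q.1) ^ σ := Real.one_lt_rpow_iff_of_pos (by positivity) |>.mpr (Or.inl ⟨hbig, hσ⟩)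
      have h2 : (1:ℝ≥0∞) < w n σ q := by
        rw [w]
        exact_mod_cast (ENNReal.one_lt_ofReal).mpr h1
      exact absurd ((le_cost_of_mem hq).trans hcost1) (not_le.mpr h2)
    calc (volume : Measure (En n)) E ≤ volume (⋃ q ∈ S, cube n q) := by
          apply measure_mono
          exact hScov.trans interior_subset
    _ ≤ ∑' (q : S), volume (cube n (q : Idx n)) := measure_biUnion_le volume hSc _
    _ ≤ ∑' (q : S), w n σ (q : Idx n) := by
          apply ENNReal.tsum_le_tsum
          intro q
          exact volume_cube_le_w hσ hσn (hsmall q q.2)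
    _ = cost n σ S := (cost_eq_tsum_subtype σ S).symm
    _ ≤ min (ε:ℝ≥0∞) 1 := le_of_lt hScost
    _ ≤ ε := min_le_left _ _
  apply le_antisymm _ zero_le
  apply ENNReal.le_of_forall_pos_le_add
  intro ε hε _
  simpa using key ε hε


/-! ### Content of balls: finite and positive -/

lemma sContent_bounded_lt_top {n : ℕ} (δ : ℝ) {B : Set (En n)}
    (hB : Bornology.IsBounded B) : sContent n δ B < ⊤ := by
  classical
  obtain ⟨R, hR⟩ := hB.subset_ball 0
  obtain ⟨N, hN⟩ := exists_nat_ge R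
  set box : Set (Fin n → ℤ) := {m | ∀ i, -(N:ℤ) - 1 ≤ m i ∧ m i ≤ N} with hbox
  have hboxfin : box.Finite := by
    have hbe : box = Set.pi Set.univ (fun _ : Fin n => Set.Icc (-(N:ℤ) - 1) N) := by
      ext m
      constructor
      · intro h i _
        exact Set.mem_Icc.mpr ⟨(h i).1, (h i).2⟩
      · intro h i
        exact ⟨(Set.mem_Icc.mp (h i (Set.mem_univ i))).1, (Set.mem_Icc.mp (h i (Set.mem_univ i))).2⟩
    rw [hbe]
    exact Set.Finite.pi (fun i => Set.finite_Icc _ _)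
  set S : Set (Idx n) := (fun m : Fin n → ℤ => ((0:ℤ), m)) '' box with hS
  have hSfin : S.Finite := hboxfin.image _
  set openBox : Set (En n) := {y | ∀ i, |y i| < (N:ℝ) + 1} with hob
  have hopen : IsOpen openBox := by
    have hobe : openBox = ⋂ i : Fin n,
        (EuclideanSpace.proj (𝕜 := ℝ) i) ⁻¹' (Ioo (-(N:ℝ) - 1) ((N:ℝ) + 1)) := by
      ext y
      simp only [hob, Set.mem_setOf_eq, Set.mem_iInter, Set.mem_preimage, Set.mem_Ioo]
      constructor
      · intro h i
        have h2 := abs_lt.mp (h i)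
        show -(N:ℝ) - 1 < y i ∧ y i < (N:ℝ) + 1
        constructor <;> linarith [h2.1, h2.2]
      · intro h i
        have h2 : -(N:ℝ) - 1 < y i ∧ y i < (N:ℝ) + 1 := h i
        rw [abs_lt]
        constructor <;> linarith [h2.1, h2.2]
    rw [hobe]
    exact isOpen_iInter_of_finite fun i =>
      (isOpen_Ioo).preimage (EuclideanSpace.proj (𝕜 := ℝ) i).continuous
  have hsub1 : B ⊆ openBox := by
    intro y hy i
    have h1 : dist y 0 < R := mem_ball.mp (hR hy)
    rw [dist_zero_right] at h1
    have := abs_coord_le_norm y i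
    have : |y i| < R := lt_of_le_of_lt this h1
    calc |y i| < R := this
    _ ≤ N := hN
    _ < N + 1 := by linarith
  have hsub2 : openBox ⊆ ⋃ q ∈ S, cube n q := by
    intro y hy
    set m : Fin n → ℤ := fun i => ⌊y i⌋ with hm
    have hmbox : m ∈ box := by
      intro i
      have h1 := abs_lt.mp (hy i)
      constructor
      · rw [hm]
        exact Int.le_floor.mpr (by push_cast; linarith [h1.1])
      · have h3 : (⌊y i⌋ : ℤ) < N + 1 := Int.floor_lt.mpr (by push_cast; linarith [h1.2])
        have h4 : m i = ⌊y i⌋ := rfl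
        omega
    refine Set.mem_iUnion₂.mpr ⟨((0:ℤ), m), Set.mem_image_of_mem _ hmbox, ?_⟩
    rw [mem_cube]
    intro i
    constructor
    · simp only [zpow_zero, mul_one]
      exact Int.floor_le (y i)
    · simp only [zpow_zero, mul_one]
      exact_mod_cast Int.lt_floor_add_one (y i)
  have hcov : B ⊆ interior (⋃ q ∈ S, cube n q) :=
    fun y hy => interior_maximal hsub2 hopen (hsub1 hy)
  have hcost : cost n δ S < ⊤ := by
    rw [cost, tsum_eq_sum (s := hSfin.toFinset)
      (fun q hq => Set.indicator_of_notMem (fun h => hq (hSfin.mem_toFinset.mpr h)) _)]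
    refine ENNReal.sum_lt_top.mpr fun q _ => ?_
    exact lt_of_le_of_lt (indicator_le_w δ S q) (lt_top_iff_ne_top.mpr (w_ne_top δ q))
  exact lt_of_le_of_lt (sContent_le hSfin.countable hcov) hcost

lemma sContent_ball_pos {n : ℕ} {δ : ℝ} (hδ : 0 < δ) (hδn : δ ≤ (n:ℝ))
    (x : En n) {r : ℝ} (hr : 0 < r) : sContent n δ (ball x r) ≠ 0 := by
  intro h
  have := volume_eq_zero_of_sContent_eq_zero hδ hδn h
  exact absurd this (measure_ball_pos volume x hr).ne'


/-! ### Choquet integrals over balls: rational approximation and semicontinuity -/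

lemma dyadicContent_mono {n : ℕ} {δ : ℝ} {E F : Set (En n)} (h : E ⊆ F) :
    dyadicContent n δ E ≤ dyadicContent n δ F := by
  rw [dyadicContent, dyadicContent]
  refine le_iInf fun c => le_iInf fun hcov => ?_
  exact iInf_le_of_le c (iInf_le_of_le (h.trans hcov) le_rfl)

lemma choquet_mono {n : ℕ} {δ : ℝ} (f : En n → ℝ≥0∞) {Ω Ω' : Set (En n)} (h : Ω ⊆ Ω') :
    choquetIntegral n δ Ω f ≤ choquetIntegral n δ Ω' f := by
  rw [choquetIntegral, choquetIntegral]
  refine lintegral_mono fun t => dyadicContent_mono ?_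
  exact fun y hy => ⟨h hy.1, hy.2⟩

section radii

variable {r : ℝ}

/-- the sequence `r - r/(k+2)` increasing to `r` -/
def useq (r : ℝ) (k : ℕ) : ℝ := r - r / (k+2)

lemma useq_pos (hr : 0 < r) (k : ℕ) : 0 < useq r k := by
  rw [useq]
  have h1 : r / (k+2) < r := div_lt_self hr (by
    have : (0:ℝ) ≤ (k:ℝ) := Nat.cast_nonneg k
    linarith)
  linarith

lemma useq_lt (hr : 0 < r) (k : ℕ) : useq r k < r := by
  rw [useq]
  have h1 : 0 < r / (k+2) := div_pos hr (by positivity)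
  linarith

lemma useq_mono (hr : 0 < r) : Monotone (useq r) := by
  intro k k' hk
  rw [useq, useq]
  have h1 : r / (k'+2) ≤ r / (k+2) := by
    apply div_le_div_of_nonneg_left hr.le (by positivity)
    have : (k:ℝ) ≤ (k':ℝ) := by exact_mod_cast hk
    linarith
  linarith

lemma useq_unbounded (hr : 0 < r) {d : ℝ} (hd : d < r) : ∃ k : ℕ, d < useq r k := by
  obtain ⟨k, hk⟩ := exists_nat_gt (r / (r - d))
  refine ⟨k, ?_⟩
  rw [useq]
  have h2 : 0 < r - d := by linarith
  have h3 : r / (r - d) < k + 2 := by linarith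
  have h4 : r / (k+2) < r - d := by
    rw [div_lt_iff₀ (by positivity)]
    calc r = (r / (r-d)) * (r - d) := by field_simp
    _ < ((k:ℝ)+2) * (r-d) := by
          apply mul_lt_mul_of_pos_right h3 h2
    _ = (r-d) * ((k:ℝ)+2) := by ring
  linarith

end radii

lemma content_ball_sup {n : ℕ} (hn : 0 < n) {δ : ℝ} (hδ : 0 < δ) (x : En n) {r : ℝ}
    (hr : 0 < r) :
    dyadicContent n δ (ball x r)
      = ⨆ (q : ℚ) (_ : 0 < (q:ℝ) ∧ (q:ℝ) < r), dyadicContent n δ (ball x (q:ℝ)) := by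
  apply le_antisymm
  · have hun : ball x r = ⋃ k, ball x (useq r k) := by
      ext y
      simp only [mem_ball, Set.mem_iUnion]
      constructor
      · intro h
        obtain ⟨k, hk⟩ := useq_unbounded hr h
        exact ⟨k, hk⟩
      · rintro ⟨k, hk⟩
        exact lt_trans hk (useq_lt hr k)
    rw [dyadicContent_eq hδ, hun]
    refine (sContent_iUnion_le hn hδ (fun k => ball_subset_ball (useq_mono hr (Nat.le_succ k)))).trans ?_
    refine iSup_le fun k => ?_
    obtain ⟨q, hq1, hq2⟩ := exists_rat_btwn (useq_lt hr k)
    refine le_trans ?_ (le_iSup₂ (f := fun (q:ℚ) (_ : 0 < (q:ℝ) ∧ (q:ℝ) < r) =>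
      dyadicContent n δ (ball x (q:ℝ))) q ⟨lt_trans (useq_pos hr k) hq1, hq2⟩)
    rw [dyadicContent_eq hδ]
    exact sContent_mono (ball_subset_ball hq1.le)
  · exact iSup₂_le fun q hq => dyadicContent_mono (ball_subset_ball hq.2.le)

lemma choquet_ball_sup {n : ℕ} (hn : 0 < n) {δ : ℝ} (hδ : 0 < δ) (f : En n → ℝ≥0∞)
    (x : En n) {r : ℝ} (hr : 0 < r) :
    choquetIntegral n δ (ball x r) f
      = ⨆ (q : ℚ) (_ : 0 < (q:ℝ) ∧ (q:ℝ) < r), choquetIntegral n δ (ball x (q:ℝ)) f := by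
  apply le_antisymm
  · have hcontent : ∀ t : ℝ, dyadicContent n δ {y | y ∈ ball x r ∧ ENNReal.ofReal t < f y}
        = ⨆ k, dyadicContent n δ {y | y ∈ ball x (useq r k) ∧ ENNReal.ofReal t < f y} := by
      intro t
      apply le_antisymm
      · have hun : {y | y ∈ ball x r ∧ ENNReal.ofReal t < f y}
            = ⋃ k, {y | y ∈ ball x (useq r k) ∧ ENNReal.ofReal t < f y} := by
          ext y
          simp only [Set.mem_setOf_eq, Set.mem_iUnion]
          constructor
          · rintro ⟨hy1, hy2⟩
            obtain ⟨k, hk⟩ := useq_unbounded hr (mem_ball.mp hy1)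
            exact ⟨k, mem_ball.mpr hk, hy2⟩
          · rintro ⟨k, hy1, hy2⟩
            exact ⟨mem_ball.mpr (lt_trans (mem_ball.mp hy1) (useq_lt hr k)), hy2⟩
        rw [dyadicContent_eq hδ, hun]
        refine (sContent_iUnion_le hn hδ (fun k => ?_)).trans ?_
        · exact fun y hy => ⟨ball_subset_ball (useq_mono hr (Nat.le_succ k)) hy.1, hy.2⟩
        · exact iSup_mono fun k => (dyadicContent_eq hδ _).ge
      · refine iSup_le fun k => dyadicContent_mono fun y hy =>
          ⟨ball_subset_ball (useq_lt hr k).le hy.1, hy.2⟩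
    have hmeas : ∀ k, Measurable (fun t : ℝ =>
        dyadicContent n δ {y | y ∈ ball x (useq r k) ∧ ENNReal.ofReal t < f y}) := by
      intro k
      apply Antitone.measurable
      intro t t' htt'
      exact dyadicContent_mono fun y hy =>
        ⟨hy.1, lt_of_le_of_lt (ENNReal.ofReal_le_ofReal htt') hy.2⟩
    have hmono2 : Monotone (fun k => fun t : ℝ =>
        dyadicContent n δ {y | y ∈ ball x (useq r k) ∧ ENNReal.ofReal t < f y}) := by
      intro k k' hk
      intro t
      exact dyadicContent_mono fun y hy => ⟨ball_subset_ball (useq_mono hr hk) hy.1, hy.2⟩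
    calc choquetIntegral n δ (ball x r) f
        = ∫⁻ t in Ioi (0:ℝ), ⨆ k,
            dyadicContent n δ {y | y ∈ ball x (useq r k) ∧ ENNReal.ofReal t < f y} := by
          rw [choquetIntegral]
          exact lintegral_congr fun t => hcontent t
    _ = ⨆ k, ∫⁻ t in Ioi (0:ℝ),
            dyadicContent n δ {y | y ∈ ball x (useq r k) ∧ ENNReal.ofReal t < f y} :=
          lintegral_iSup hmeas hmono2
    _ ≤ _ := by
          refine iSup_le fun k => ?_
          obtain ⟨q, hq1, hq2⟩ := exists_rat_btwn (useq_lt hr k)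
          refine le_trans ?_ (le_iSup₂ (f := fun (q:ℚ) (_ : 0 < (q:ℝ) ∧ (q:ℝ) < r) =>
            choquetIntegral n δ (ball x (q:ℝ)) f) q ⟨lt_trans (useq_pos hr k) hq1, hq2⟩)
          exact choquet_mono f (ball_subset_ball hq1.le)
  · exact iSup₂_le fun q hq => choquet_mono f (ball_subset_ball hq.2.le)

lemma choquet_ball_lsc {n : ℕ} (hn : 0 < n) {δ : ℝ} (hδ : 0 < δ) (f : En n → ℝ≥0∞)
    {q0 : ℝ} (hq0 : 0 < q0) :
    LowerSemicontinuous (fun x : En n => choquetIntegral n δ (ball x q0) f) := by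
  intro x y hy
  simp only at hy
  rw [choquet_ball_sup hn hδ f x hq0, gt_iff_lt, lt_iSup_iff] at hy
  obtain ⟨q, hq⟩ := hy
  rw [lt_iSup_iff] at hq
  obtain ⟨⟨hq1, hq2⟩, hq3⟩ := hq
  filter_upwards [ball_mem_nhds x (by linarith : (0:ℝ) < q0 - q)] with x' hx'
  refine lt_of_lt_of_le hq3 (choquet_mono f ?_)
  intro z hz
  rw [mem_ball] at hz hx' ⊢
  have htri := dist_triangle z x x'
  rw [dist_comm x x'] at htri
  linarith

lemma content_ball_lsc {n : ℕ} (hn : 0 < n) {δ : ℝ} (hδ : 0 < δ)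
    {q0 : ℝ} (hq0 : 0 < q0) :
    LowerSemicontinuous (fun x : En n => dyadicContent n δ (ball x q0)) := by
  intro x y hy
  simp only at hy
  rw [content_ball_sup hn hδ x hq0, gt_iff_lt, lt_iSup_iff] at hy
  obtain ⟨q, hq⟩ := hy
  rw [lt_iSup_iff] at hq
  obtain ⟨⟨hq1, hq2⟩, hq3⟩ := hq
  filter_upwards [ball_mem_nhds x (by linarith : (0:ℝ) < q0 - q)] with x' hx'
  refine lt_of_lt_of_le hq3 (dyadicContent_mono ?_)
  intro z hz
  rw [mem_ball] at hz hx' ⊢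
  have htri := dist_triangle z x x'
  rw [dist_comm x x'] at htri
  linarith


/-! ### Measurability of the regularized limsup average, and the key identity -/

lemma measurable_ballAvg_rat {n : ℕ} (hn : 0 < n) {δ : ℝ} (hδ : 0 < δ)
    (f : En n → ℝ≥0∞) (q : ℚ) (hq : 0 < (q:ℝ)) :
    Measurable (fun x : En n => ballAvg n δ f x (q:ℝ)) := by
  have h1 : Measurable (fun x : En n => choquetIntegral n δ (ball x (q:ℝ)) f) :=
    (choquet_ball_lsc hn hδ f hq).measurable
  have h2 : Measurable (fun x : En n => dyadicContent n δ (ball x (q:ℝ))) :=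
    (content_ball_lsc hn hδ hq).measurable
  exact h1.div h2

lemma measurable_gstar {n : ℕ} (hn : 0 < n) {δ : ℝ} (hδ : 0 < δ) (f : En n → ℝ≥0∞) :
    Measurable (fun x : En n => ⨅ (m:ℕ), ⨆ (q:ℚ)
      (_ : 0 < (q:ℝ) ∧ (q:ℝ) < 1/((m:ℝ)+1)), ballAvg n δ f x (q:ℝ)) := by
  apply Measurable.iInf
  intro m
  apply Measurable.iSup
  intro q
  by_cases hq : 0 < (q:ℝ) ∧ (q:ℝ) < 1/((m:ℝ)+1)
  · simp only [iSup_pos hq]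
    exact measurable_ballAvg_rat hn hδ f q hq.1
  · simp only [iSup_neg hq]
    exact measurable_const

lemma limsupAvg_eq_gstar {n : ℕ} (hn : 0 < n) {δ : ℝ} (hδ : 0 < δ) (hδn : δ ≤ (n:ℝ))
    (f : En n → ℝ≥0∞) (x : En n) :
    limsupAvg n δ f x = ⨅ (m:ℕ), ⨆ (q:ℚ)
      (_ : 0 < (q:ℝ) ∧ (q:ℝ) < 1/((m:ℝ)+1)), ballAvg n δ f x (q:ℝ) := by
  have hC0 : ∀ {s : ℝ}, 0 < s → dyadicContent n δ (ball x s) ≠ 0 := by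
    intro s hs
    rw [dyadicContent_eq hδ]
    exact sContent_ball_pos hδ hδn x hs
  have hCtop : ∀ (s : ℝ), dyadicContent n δ (ball x s) ≠ ⊤ := by
    intro s
    rw [dyadicContent_eq hδ]
    exact (sContent_bounded_lt_top δ Metric.isBounded_ball).ne
  rw [limsupAvg, (nhdsGT_basis (0:ℝ)).limsup_eq_iInf_iSup]
  apply le_antisymm
  · refine le_iInf fun m => ?_
    have hpm : (0:ℝ) < 1/((m:ℝ)+1) := by positivity
    refine le_trans (iInf_le _ (1/((m:ℝ)+1))) ?_
    refine le_trans (iInf_le _ hpm) ?_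
    refine iSup_le fun r => iSup_le fun hr => ?_
    obtain ⟨hr0, hrp⟩ := Set.mem_Ioo.mp hr
    set L := ⨆ (q:ℚ) (_ : 0 < (q:ℝ) ∧ (q:ℝ) < 1/((m:ℝ)+1)), ballAvg n δ f x (q:ℝ) with hL
    have key : choquetIntegral n δ (ball x r) f ≤ L * dyadicContent n δ (ball x r) := by
      rw [choquet_ball_sup hn hδ f x hr0]
      refine iSup₂_le fun q' hq' => ?_
      obtain ⟨h1, h2⟩ := hq'
      have hq'le : ballAvg n δ f x (q':ℝ) ≤ L :=
        le_iSup₂ (f := fun (q:ℚ) (_ : 0 < (q:ℝ) ∧ (q:ℝ) < 1/((m:ℝ)+1)) =>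
          ballAvg n δ f x (q:ℝ)) q' ⟨h1, lt_trans h2 hrp⟩
      have hdiv : choquetIntegral n δ (ball x (q':ℝ)) f / dyadicContent n δ (ball x (q':ℝ)) ≤ L := hq'le
      have h3 : choquetIntegral n δ (ball x (q':ℝ)) f ≤ L * dyadicContent n δ (ball x (q':ℝ)) :=
        (ENNReal.div_le_iff_le_mul (Or.inl (hC0 h1)) (Or.inl (hCtop _))).mp hdiv
      calc choquetIntegral n δ (ball x (q':ℝ)) f
          ≤ L * dyadicContent n δ (ball x (q':ℝ)) := h3
      _ ≤ L * dyadicContent n δ (ball x r) :=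
            mul_le_mul_right (dyadicContent_mono (ball_subset_ball h2.le)) L
    exact (ENNReal.div_le_iff_le_mul (Or.inl (hC0 hr0)) (Or.inl (hCtop _))).mpr key
  · refine le_iInf fun p => le_iInf fun hp => ?_
    obtain ⟨m, hm⟩ := exists_nat_one_div_lt hp
    refine le_trans (iInf_le _ m) ?_
    refine iSup₂_le fun q hq => ?_
    refine le_trans ?_ (le_iSup₂ (f := fun (r:ℝ) (_ : r ∈ Ioo (0:ℝ) p) =>
      ballAvg n δ f x r) (q:ℝ) (Set.mem_Ioo.mpr ⟨hq.1, lt_trans hq.2 hm⟩))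
    exact le_rfl

end DyProof

/-- if a nonnegative locally `nL¹(H̃^δ_∞)` function coincides
`H̃^{δ'}_∞`-almost everywhere with the limsup of its `δ`-dimensional ball averages,
then it is Lebesgue measurable. -/
theorem limsup_avg_eq_implies_lebesgue_measurable (n : ℕ) (hn : 1 ≤ n)
    (δ δ' : ℝ) (hδ0 : 0 < δ) (hδn : δ ≤ n) (hδ'0 : 0 < δ') (hδ'n : δ' ≤ n)
    (f : En n → ℝ≥0∞)
    (hf : ∀ K : Set (En n), Bornology.IsBounded K → choquetIntegral n δ K f < ⊤)
    (hae : ∃ E : Set (En n), dyadicContent n δ' E = 0 ∧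
      ∀ x ∉ E, f x = limsupAvg n δ f x) :
    NullMeasurable f (volume : Measure (En n)) := by
  classical
  obtain ⟨E, hE0, hEae⟩ := hae
  have hn0 : 0 < n := hn
  have hvolE : (volume : Measure (En n)) E = 0 := by
    apply DyProof.volume_eq_zero_of_sContent_eq_zero hδ'0 hδ'n
    rw [← DyProof.dyadicContent_eq hδ'0]
    exact hE0
  set g : En n → ℝ≥0∞ := fun x => ⨅ (m:ℕ), ⨆ (q:ℚ)
      (_ : 0 < (q:ℝ) ∧ (q:ℝ) < 1/((m:ℝ)+1)), ballAvg n δ f x (q:ℝ) with hg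
  have hgmeas : Measurable g := DyProof.measurable_gstar hn0 hδ0 f
  have hsub : {x | ¬ g x = f x} ⊆ E := by
    intro x hx
    by_contra hxE
    apply hx
    show (⨅ (m:ℕ), ⨆ (q:ℚ) (_ : 0 < (q:ℝ) ∧ (q:ℝ) < 1/((m:ℝ)+1)), ballAvg n δ f x (q:ℝ)) = f x
    rw [← DyProof.limsupAvg_eq_gstar hn0 hδ0 hδn f x]
    exact (hEae x hxE).symm
  have haeq : g =ᶠ[ae (volume : Measure (En n))] f :=
    MeasureTheory.ae_iff.mpr (measure_mono_null hsub hvolE)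
  exact (hgmeas.nullMeasurable).congr haeq

end
end

section
/- Let n ≥ 1. If f ∈ nL¹(ℝⁿ, H̃^n_∞) (the case δ = n) and f is Lebesgue measurable, then f is an nL¹-limit of continuous functions: there is a sequence of continuous functions φ_i : ℝⁿ → ℝ with ∫_{ℝⁿ} |f − φ_i| dH̃^n_∞ → 0 as i → ∞. -/
open MeasureTheory Set Metric Filter Topology
open scoped ENNReal

noncomputable section

section AuxContent
variable {n : ℕ}

lemma dyadicCube_eq_preimage (n : ℕ) (k : ℤ) (m : Fin n → ℤ) :
    dyadicCube n k m = ((MeasurableEquiv.toLp 2 (Fin n → ℝ)).symm) ⁻¹'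
      (univ.pi fun i => Ico ((m i : ℝ) * 2 ^ k) (((m i : ℝ) + 1) * 2 ^ k)) := by
  ext x
  simp [dyadicCube, Set.mem_pi, MeasurableEquiv.coe_toLp_symm]

lemma measurableSet_dyadicCube (n : ℕ) (k : ℤ) (m : Fin n → ℤ) :
    MeasurableSet (dyadicCube n k m) := by
  rw [dyadicCube_eq_preimage]
  exact (MeasurableEquiv.toLp 2 (Fin n → ℝ)).symm.measurable
    (MeasurableSet.univ_pi fun i => measurableSet_Ico)

lemma volume_dyadicCube (n : ℕ) (k : ℤ) (m : Fin n → ℤ) :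
    volume (dyadicCube n k m) = ENNReal.ofReal (((2:ℝ) ^ k) ^ n) := by
  rw [dyadicCube_eq_preimage,
    (EuclideanSpace.volume_preserving_symm_measurableEquiv_toLp (Fin n)).measure_preimage
      (MeasurableSet.univ_pi fun i => measurableSet_Ico).nullMeasurableSet,
    volume_pi_pi]
  have : ∀ i : Fin n, volume (Ico ((m i : ℝ) * 2 ^ k) (((m i : ℝ) + 1) * 2 ^ k))
      = ENNReal.ofReal ((2:ℝ) ^ k) := by
    intro i
    rw [Real.volume_Ico]
    ring_nf
  simp only [this, Finset.prod_const, Finset.card_univ, Fintype.card_fin]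
  rw [← ENNReal.ofReal_pow (by positivity)]

/-- index of the level-k dyadic cube containing x -/
def floorIdx (k : ℤ) (x : En n) : Fin n → ℤ := fun i => ⌊x i / 2 ^ k⌋

lemma mem_dyadicCube_floorIdx (k : ℤ) (x : En n) :
    x ∈ dyadicCube n k (floorIdx k x) := by
  intro i
  have h2 : (0:ℝ) < 2 ^ k := by positivity
  constructor
  · exact (le_div_iff₀ h2).mp (Int.floor_le _)
  · exact (div_lt_iff₀ h2).mp (Int.lt_floor_add_one _)

lemma floorIdx_eq_of_mem {k : ℤ} {m : Fin n → ℤ} {x : En n}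
    (h : x ∈ dyadicCube n k m) : floorIdx k x = m := by
  funext i
  have h2 : (0:ℝ) < 2 ^ k := by positivity
  have := h i
  have h1 : (m i : ℝ) ≤ x i / 2 ^ k := by
    rw [le_div_iff₀ h2]; exact this.1
  have h3 : x i / 2 ^ k < (m i : ℝ) + 1 := by
    rw [div_lt_iff₀ h2]; exact this.2
  exact Int.floor_eq_iff.mpr ⟨h1, h3⟩

/-- 1D nesting of dyadic intervals -/
lemma dyadic_interval_nested {k k' : ℤ} (hk : k ≤ k') {a b : ℤ} {y z : ℝ}
    (hy1 : (a:ℝ) * 2 ^ k ≤ y) (hy2 : y < ((a:ℝ) + 1) * 2 ^ k)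
    (hy1' : (b:ℝ) * 2 ^ k' ≤ y) (hy2' : y < ((b:ℝ) + 1) * 2 ^ k')
    (hz1 : (a:ℝ) * 2 ^ k ≤ z) (hz2 : z < ((a:ℝ) + 1) * 2 ^ k) :
    (b:ℝ) * 2 ^ k' ≤ z ∧ z < ((b:ℝ) + 1) * 2 ^ k' := by
  have h2 : (0:ℝ) < 2 ^ k := by positivity
  set D : ℤ := 2 ^ (k' - k).toNat with hD
  have hDcast : (D : ℝ) * 2 ^ k = 2 ^ k' := by
    rw [hD]
    push_cast
    rw [← zpow_natCast (2:ℝ), Int.toNat_of_nonneg (by omega), ← zpow_add₀ (two_ne_zero)]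
    ring_nf
  have hba : b * D ≤ a := by
    by_contra hcon
    push_neg at hcon
    have : (a:ℝ) + 1 ≤ (b*D : ℤ) := by exact_mod_cast hcon
    have : ((a:ℝ) + 1) * 2 ^ k ≤ (b:ℝ) * 2 ^ k' := by
      rw [← hDcast]
      push_cast at this ⊢
      nlinarith [h2]
    linarith
  have hab : a + 1 ≤ (b + 1) * D := by
    by_contra hcon
    push_neg at hcon
    have hle : ((b+1)*D : ℤ) ≤ (a:ℝ) := by exact_mod_cast (by omega : (b+1)*D ≤ a)
    have : ((b:ℝ) + 1) * 2 ^ k' ≤ (a:ℝ) * 2 ^ k := by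
      rw [← hDcast]
      push_cast at hle ⊢
      nlinarith [h2]
    linarith
  constructor
  · have : (b:ℝ) * 2 ^ k' ≤ (a:ℝ) * 2 ^ k := by
      rw [← hDcast]
      have : ((b*D : ℤ) : ℝ) ≤ (a:ℝ) := by exact_mod_cast hba
      push_cast at this
      nlinarith [h2]
    linarith
  · have : ((a:ℝ) + 1) * 2 ^ k ≤ ((b:ℝ) + 1) * 2 ^ k' := by
      rw [← hDcast]
      have : ((a:ℝ) + 1) ≤ (((b+1)*D : ℤ) : ℝ) := by exact_mod_cast hab
      push_cast at this
      nlinarith [h2]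
    linarith

lemma dyadicCube_nested {k k' : ℤ} (hk : k ≤ k') {m m' : Fin n → ℤ} {y : En n}
    (hy : y ∈ dyadicCube n k m) (hy' : y ∈ dyadicCube n k' m') :
    dyadicCube n k m ⊆ dyadicCube n k' m' := by
  intro z hz i
  exact dyadic_interval_nested hk (hy i).1 (hy i).2 (hy' i).1 (hy' i).2 (hz i).1 (hz i).2

/-- points of a dyadic cube at level k are within √n 2^k of each other -/
lemma dist_le_of_mem_dyadicCube {k : ℤ} {m : Fin n → ℤ} {x y : En n}
    (hx : x ∈ dyadicCube n k m) (hy : y ∈ dyadicCube n k m) :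
    dist x y ≤ Real.sqrt n * 2 ^ k := by
  have h2 : (0:ℝ) < 2 ^ k := by positivity
  rw [EuclideanSpace.dist_eq]
  have hb : ∀ i, dist (x i) (y i) ^ 2 ≤ (2 ^ k : ℝ) ^ 2 := by
    intro i
    have h1 := hx i; have h2' := hy i
    have : |x i - y i| ≤ 2 ^ k := by
      rw [abs_le]; constructor <;> nlinarith [h1.1, h1.2, h2'.1, h2'.2]
    rw [Real.dist_eq]
    nlinarith [abs_nonneg (x i - y i)]
  calc √(∑ i, dist (x i) (y i) ^ 2) ≤ √(∑ _i : Fin n, (2 ^ k : ℝ) ^ 2) := by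
        apply Real.sqrt_le_sqrt
        exact Finset.sum_le_sum fun i _ => hb i
    _ = Real.sqrt n * 2 ^ k := by
        rw [Finset.sum_const, Finset.card_univ, Fintype.card_fin, nsmul_eq_mul,
          Real.sqrt_mul (by positivity), Real.sqrt_sq h2.le]

/-- existence of a small dyadic cube around x inside an open set -/
lemma exists_cube_subset {U : Set (En n)} (hU : IsOpen U) {x : En n} (hx : x ∈ U) :
    ∃ k : ℤ, dyadicCube n k (floorIdx k x) ⊆ U := by
  obtain ⟨ε, hε, hball⟩ := Metric.isOpen_iff.mp hU x hx
  obtain ⟨N, hN⟩ := exists_pow_lt_of_lt_one (x := ε / (Real.sqrt n + 1))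
    (by positivity) (by norm_num : (1:ℝ)/2 < 1)
  refine ⟨-(N:ℤ), fun y hy => hball ?_⟩
  have hxy : dist y x ≤ Real.sqrt n * 2 ^ (-(N:ℤ)) :=
    dist_le_of_mem_dyadicCube hy (mem_dyadicCube_floorIdx _ x)
  have h2N : (2:ℝ) ^ (-(N:ℤ)) = (1/2:ℝ)^N := by
    rw [zpow_neg, zpow_natCast]
    simp [one_div, inv_pow]
  have hsq : (0:ℝ) ≤ Real.sqrt n := Real.sqrt_nonneg _
  have : Real.sqrt n * 2 ^ (-(N:ℤ)) < ε := by
    rw [h2N]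
    have h1 : (1/2:ℝ)^N < ε / (Real.sqrt n + 1) := hN
    have h2 : (0:ℝ) < (1/2:ℝ)^N := by positivity
    calc Real.sqrt n * (1/2:ℝ)^N ≤ (Real.sqrt n + 1) * (1/2:ℝ)^N := by nlinarith
      _ < (Real.sqrt n + 1) * (ε / (Real.sqrt n + 1)) := by
          apply mul_lt_mul_of_pos_left h1 (by positivity)
      _ = ε := by field_simp
  exact mem_ball.mpr (lt_of_le_of_lt hxy this)

/-- bound on levels of cubes inside a finite-measure set -/
lemma level_bdd {U : Set (En n)} (hn : 1 ≤ n) (hfin : volume U ≠ ⊤) :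
    ∃ b : ℤ, ∀ k : ℤ, ∀ m : Fin n → ℤ, dyadicCube n k m ⊆ U → k ≤ b := by
  set r : ℝ := (volume U).toReal + 1 with hr
  have hUr : volume U < ENNReal.ofReal r := by
    rw [ENNReal.lt_ofReal_iff_toReal_lt hfin, hr]
    linarith
  obtain ⟨N, hN⟩ := pow_unbounded_of_one_lt r (one_lt_two (α := ℝ))
  refine ⟨N, fun k m hsub => ?_⟩
  by_contra hcon
  push_neg at hcon
  have hk1 : (1:ℝ) ≤ 2 ^ k := one_le_zpow₀ (one_le_two) (by omega)
  have h1 : (2:ℝ) ^ k ≤ ((2:ℝ) ^ k) ^ n := le_self_pow₀ hk1 (by omega)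
  have h2 : (2:ℝ) ^ (N:ℤ) ≤ (2:ℝ) ^ k := by
    apply zpow_le_zpow_right₀ one_le_two (by omega)
  have h3 : ((2:ℝ)^k)^n < r := by
    have hle : ENNReal.ofReal (((2:ℝ)^k)^n) ≤ volume U := by
      rw [← volume_dyadicCube n k m]
      exact measure_mono hsub
    have := lt_of_le_of_lt hle hUr
    exact (ENNReal.ofReal_lt_ofReal_iff_of_nonneg (by positivity)).mp this
  rw [zpow_natCast] at h2
  linarith

lemma dyadicContent_mono {δ : ℝ} {E F : Set (En n)} (h : E ⊆ F) :
    dyadicContent n δ E ≤ dyadicContent n δ F := by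
  refine le_iInf₂ fun c hc => iInf₂_le c (h.trans hc)

lemma volume_le_dyadicContent (E : Set (En n)) :
    volume E ≤ dyadicContent n (n : ℝ) E := by
  refine le_iInf₂ fun c hc => ?_
  calc volume E ≤ volume (interior (⋃ i, dyadicCube n (c i).1 (c i).2)) := measure_mono hc
    _ ≤ volume (⋃ i, dyadicCube n (c i).1 (c i).2) := measure_mono interior_subset
    _ ≤ ∑' i, volume (dyadicCube n (c i).1 (c i).2) := measure_iUnion_le _
    _ = ∑' i, ENNReal.ofReal (((2:ℝ) ^ (c i).1) ^ (n:ℝ)) := by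
        refine tsum_congr fun i => ?_
        rw [volume_dyadicCube, Real.rpow_natCast]

lemma dyadicContent_open_le (hn : 1 ≤ n) {U : Set (En n)} (hU : IsOpen U)
    (hfin : volume U ≠ ⊤) : dyadicContent n (n : ℝ) U ≤ volume U := by
  refine ENNReal.le_of_forall_pos_le_add fun ε hε _ => ?_
  have hεR : (0:ℝ) < (ε:ℝ) := hε
  obtain ⟨N, hN⟩ := exists_pow_lt_of_lt_one (x := (ε:ℝ)/2)
    (by positivity) (by norm_num : (1:ℝ)/2 < 1)
  obtain ⟨b, hb⟩ := level_bdd hn hfin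
  have hgk : ∀ x ∈ U, ∃ k : ℤ, dyadicCube n k (floorIdx k x) ⊆ U ∧
      ∀ k' : ℤ, dyadicCube n k' (floorIdx k' x) ⊆ U → k' ≤ k := by
    intro x hx
    obtain ⟨k, hk1, hk2⟩ := Int.exists_greatest_of_bdd
      (P := fun k => dyadicCube n k (floorIdx k x) ⊆ U)
      ⟨b, fun z hz => hb z _ hz⟩ (exists_cube_subset hU hx)
    exact ⟨k, hk1, hk2⟩
  choose! gk hgk1 hgk2 using hgk
  set Q : ℤ × (Fin n → ℤ) → Set (En n) := fun p => dyadicCube n p.1 p.2 with hQ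
  set g : ℤ × (Fin n → ℤ) → ℝ≥0∞ := fun p => ENNReal.ofReal (((2:ℝ) ^ p.1) ^ (n:ℝ)) with hg
  have hgQ : ∀ p, g p = volume (Q p) := by
    intro p
    simp only [hg, hQ]
    rw [volume_dyadicCube, Real.rpow_natCast]
  set S : Set (ℤ × (Fin n → ℤ)) := (fun x => (gk x, floorIdx (gk x) x)) '' U with hS
  have hsub : ∀ p ∈ S, Q p ⊆ U := by rintro p ⟨x, hx, rfl⟩; exact hgk1 x hx
  have hcover : U ⊆ ⋃ p ∈ S, Q p := fun x hx =>
    mem_biUnion (mem_image_of_mem _ hx) (mem_dyadicCube_floorIdx _ x)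
  have hkey : ∀ x ∈ U, ∀ y ∈ U, gk x ≤ gk y →
      (Q (gk x, floorIdx (gk x) x) ∩ Q (gk y, floorIdx (gk y) y)).Nonempty →
      (gk x, floorIdx (gk x) x) = (gk y, floorIdx (gk y) y) := by
    rintro x hx y hy hle ⟨z, hz1, hz2⟩
    have hss : Q (gk x, floorIdx (gk x) x) ⊆ Q (gk y, floorIdx (gk y) y) :=
      dyadicCube_nested hle hz1 hz2
    have hxq : x ∈ Q (gk y, floorIdx (gk y) y) := hss (mem_dyadicCube_floorIdx _ x)
    have hidx : floorIdx (gk y) x = floorIdx (gk y) y := floorIdx_eq_of_mem hxq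
    have hsub' : dyadicCube n (gk y) (floorIdx (gk y) x) ⊆ U := by
      rw [hidx]; exact hgk1 y hy
    have hge : gk y ≤ gk x := hgk2 x hx _ hsub'
    have hkk : gk x = gk y := le_antisymm hle hge
    refine Prod.ext hkk ?_
    rw [← hidx, hkk]
  have hdisj : S.PairwiseDisjoint Q := by
    rintro p ⟨x, hx, rfl⟩ q ⟨y, hy, rfl⟩ hne
    rw [Function.onFun, Set.disjoint_iff_inter_eq_empty]
    by_contra hcon
    rcases le_total (gk x) (gk y) with h | h
    · exact hne (hkey x hx y hy h (nonempty_iff_ne_empty.mpr hcon))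
    · refine hne ((hkey y hy x hx h ?_).symm)
      rw [inter_comm]
      exact nonempty_iff_ne_empty.mpr hcon
  have hScount : S.Countable := Set.to_countable S
  have hUnion : ⋃ p ∈ S, Q p = U := by
    refine subset_antisymm ?_ hcover
    exact iUnion₂_subset hsub
  have hsumS : ∑' p : S, g p = volume U := by
    rw [← hUnion, measure_biUnion hScount hdisj
      (fun p _ => measurableSet_dyadicCube n p.1 p.2)]
    exact tsum_congr fun p => hgQ p
  -- padding cubes
  set ι : ℕ → ℤ × (Fin n → ℤ) := fun j => (-(N:ℤ) - 1 - j, fun _ => 0) with hι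
  have hιinj : Function.Injective ι := by
    intro a b hab
    have := congrArg Prod.fst hab
    simp only [hι] at this
    omega
  set T : Set (ℤ × (Fin n → ℤ)) := Set.range ι with hT
  have hsumT : ∑' p : T, g p ≤ (ε : ℝ≥0∞) := by
    rw [hT, ← (Equiv.ofInjective ι hιinj).tsum_eq (fun p : Set.range ι => g p)]
    have hterm : ∀ j : ℕ, g (ι j) ≤
        ENNReal.ofReal ((2:ℝ) ^ (-(N:ℤ) - 1)) * (ENNReal.ofReal (1/2:ℝ)) ^ j := by
      intro j
      have h0 : (0:ℝ) < (2:ℝ) ^ (-(N:ℤ) - 1 - j) := by positivity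
      have h1 : ((2:ℝ) ^ (-(N:ℤ) - 1 - (j:ℤ))) ^ (n:ℝ) ≤ (2:ℝ) ^ (-(N:ℤ) - 1 - (j:ℤ)) := by
        nth_rewrite 2 [← Real.rpow_one ((2:ℝ) ^ (-(N:ℤ) - 1 - (j:ℤ)))]
        apply Real.rpow_le_rpow_of_exponent_ge h0
        · exact zpow_le_one_of_nonpos₀ one_le_two (by omega)
        · exact_mod_cast hn
      have h2 : (2:ℝ) ^ (-(N:ℤ) - 1 - (j:ℤ)) = (2:ℝ) ^ (-(N:ℤ) - 1) * (1/2:ℝ)^j := by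
        rw [sub_eq_add_neg (-(N:ℤ) - 1), zpow_add₀ (two_ne_zero)]
        congr 1
        rw [zpow_neg, zpow_natCast]
        simp [one_div, inv_pow]
      calc g (ι j) ≤ ENNReal.ofReal ((2:ℝ) ^ (-(N:ℤ) - 1 - (j:ℤ))) := by
            rw [hg]
            exact ENNReal.ofReal_le_ofReal h1
        _ = ENNReal.ofReal ((2:ℝ) ^ (-(N:ℤ) - 1)) * (ENNReal.ofReal (1/2:ℝ)) ^ j := by
            rw [h2, ENNReal.ofReal_mul (by positivity), ENNReal.ofReal_pow (by norm_num)]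
    calc ∑' j : ℕ, g (ι j)
        ≤ ∑' j : ℕ, ENNReal.ofReal ((2:ℝ) ^ (-(N:ℤ) - 1)) * (ENNReal.ofReal (1/2:ℝ)) ^ j :=
          ENNReal.tsum_le_tsum hterm
      _ = ENNReal.ofReal ((2:ℝ) ^ (-(N:ℤ) - 1)) * (1 - ENNReal.ofReal (1/2:ℝ))⁻¹ := by
          rw [ENNReal.tsum_mul_left, ENNReal.tsum_geometric]
      _ ≤ (ε : ℝ≥0∞) := by
          have hhalf : ENNReal.ofReal (1/2:ℝ) = 2⁻¹ := by
            rw [one_div, ENNReal.ofReal_inv_of_pos (by norm_num)]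
            norm_num
          rw [hhalf, ENNReal.one_sub_inv_two, inv_inv]
          have h3 : (2:ℝ) ^ (-(N:ℤ) - 1) * 2 ≤ (ε:ℝ) := by
            have : (2:ℝ) ^ (-(N:ℤ) - 1) = (1/2:ℝ)^N * (1/2) := by
              rw [sub_eq_add_neg, zpow_add₀ (two_ne_zero), zpow_neg, zpow_natCast]
              simp [one_div, inv_pow]
            rw [this]
            nlinarith [hN]
          calc ENNReal.ofReal ((2:ℝ) ^ (-(N:ℤ) - 1)) * 2
              = ENNReal.ofReal ((2:ℝ) ^ (-(N:ℤ) - 1) * 2) := by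
                rw [ENNReal.ofReal_mul (by positivity)]
                norm_num
            _ ≤ ENNReal.ofReal (ε:ℝ) := ENNReal.ofReal_le_ofReal h3
            _ = (ε : ℝ≥0∞) := ENNReal.ofReal_coe_nnreal
  -- the enumeration
  set S' : Set (ℤ × (Fin n → ℤ)) := S ∪ T with hS'
  have hS'count : S'.Countable := hScount.union (Set.countable_range ι)
  have hS'inf : S'.Infinite := Set.Infinite.mono subset_union_right
    (Set.infinite_range_of_injective hιinj)
  haveI := hS'count.to_subtype
  haveI := hS'inf.to_subtype
  obtain ⟨e⟩ : Nonempty (ℕ ≃ ↥S') := nonempty_equiv_of_countable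
  set c : ℕ → ℤ × (Fin n → ℤ) := fun i => (e i : ℤ × (Fin n → ℤ)) with hc
  have hcov : U ⊆ interior (⋃ i, dyadicCube n (c i).1 (c i).2) := by
    rw [← hU.interior_eq]
    apply interior_mono
    intro x hx
    have hp : (gk x, floorIdx (gk x) x) ∈ S' := Or.inl (mem_image_of_mem _ hx)
    refine mem_iUnion.mpr ⟨e.symm ⟨_, hp⟩, ?_⟩
    have : c (e.symm ⟨_, hp⟩) = (gk x, floorIdx (gk x) x) := by
      simp only [hc, Equiv.apply_symm_apply]
    rw [this]
    exact mem_dyadicCube_floorIdx _ x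
  calc dyadicContent n (n : ℝ) U ≤ ∑' i, ENNReal.ofReal (((2:ℝ) ^ (c i).1) ^ (n:ℝ)) :=
        iInf₂_le c hcov
    _ = ∑' p : ↥S', g p := e.tsum_eq (fun p : ↥S' => g p)
    _ ≤ ∑' p : S, g p + ∑' p : T, g p := ENNReal.tsum_union_le g S T
    _ ≤ volume U + ε := by
        rw [hsumS]
        exact add_le_add_right hsumT _

lemma dyadicContent_le_volume (hn : 1 ≤ n) (E : Set (En n)) :
    dyadicContent n (n : ℝ) E ≤ volume E := by
  rcases eq_or_ne (volume E) ⊤ with h | h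
  · rw [h]; exact le_top
  refine ENNReal.le_of_forall_pos_le_add fun ε hε _ => ?_
  have hlt : volume E < volume E + ε := by
    apply ENNReal.lt_add_right h
    exact_mod_cast hε.ne'
  obtain ⟨U, hEU, hUopen, hUlt⟩ := Set.exists_isOpen_lt_of_lt E _ hlt
  have hUfin : volume U ≠ ⊤ := by
    intro hcon
    rw [hcon] at hUlt
    exact (hUlt.trans_le le_top).false
  calc dyadicContent n (n : ℝ) E ≤ dyadicContent n (n : ℝ) U := dyadicContent_mono hEU
    _ ≤ volume U := dyadicContent_open_le hn hUopen hUfin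
    _ ≤ volume E + ε := hUlt.le

lemma dyadicContent_eq_volume (hn : 1 ≤ n) (E : Set (En n)) :
    dyadicContent n (n : ℝ) E = volume E :=
  le_antisymm (dyadicContent_le_volume hn E) (volume_le_dyadicContent E)

lemma choquetIntegralAbs_eq_lintegral (hn : 1 ≤ n) (g : En n → ℝ)
    (hg : AEMeasurable g (volume : Measure (En n))) :
    choquetIntegralAbs n (n : ℝ) univ g = ∫⁻ x, ENNReal.ofReal |g x| := by
  unfold choquetIntegralAbs choquetIntegral
  rw [lintegral_eq_lintegral_meas_lt volume
    (Filter.Eventually.of_forall fun x => abs_nonneg (g x))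
    (continuous_abs.measurable.comp_aemeasurable hg)]
  refine setLIntegral_congr_fun measurableSet_Ioi ?_
  intro t ht
  dsimp only
  have hset : {x : En n | x ∈ univ ∧ ENNReal.ofReal t < ENNReal.ofReal |g x|}
      = {a : En n | t < |g a|} := by
    ext x
    simp only [mem_setOf_eq, mem_univ, true_and]
    rw [ENNReal.ofReal_lt_ofReal_iff_of_nonneg (le_of_lt ht)]
  rw [hset, dyadicContent_eq_volume hn]

end AuxContent

/-- a Lebesgue measurable function in `nL¹(ℝⁿ, H̃^n_∞)` is an
`nL¹`-limit of continuous functions. -/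
theorem measurable_is_nL1_limit (n : ℕ) (hn : 1 ≤ n) (f : En n → ℝ)
    (hf : choquetIntegralAbs n (n : ℝ) univ f < ⊤)
    (hmeas : NullMeasurable f (volume : Measure (En n))) :
    ∃ φ : ℕ → En n → ℝ, (∀ i, Continuous (φ i)) ∧
      Tendsto (fun i => choquetIntegralAbs n (n : ℝ) univ (fun x => f x - φ i x))
        atTop (𝓝 0) := by
  have hae : AEMeasurable f (volume : Measure (En n)) := hmeas.aemeasurable
  have hint : ∫⁻ x, ENNReal.ofReal |f x| < ⊤ := by
    rw [← choquetIntegralAbs_eq_lintegral hn f hae]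
    exact hf
  have heLp : ∀ g : En n → ℝ, eLpNorm g 1 (volume : Measure (En n))
      = ∫⁻ x, ENNReal.ofReal |g x| := by
    intro g
    rw [eLpNorm_one_eq_lintegral_enorm]
    refine lintegral_congr fun x => ?_
    rw [← ofReal_norm_eq_enorm, Real.norm_eq_abs]
  have hmem : MemLp f 1 (volume : Measure (En n)) := by
    refine ⟨hae.aestronglyMeasurable, ?_⟩
    rw [heLp]
    exact hint
  haveI : Fact ((1:ℝ≥0∞) ≤ 1) := ⟨le_rfl⟩
  have hexists : ∀ i : ℕ, ∃ g : En n → ℝ, Continuous g ∧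
      eLpNorm (f - g) 1 (volume : Measure (En n)) ≤ (2:ℝ≥0∞)⁻¹ ^ i := by
    intro i
    obtain ⟨g, _, hle, hcont, _⟩ := hmem.exists_hasCompactSupport_eLpNorm_sub_le
      (ENNReal.one_ne_top) (ε := (2:ℝ≥0∞)⁻¹ ^ i) (pow_ne_zero i (by simp))
    exact ⟨g, hcont, hle⟩
  choose φ hφcont hφle using hexists
  refine ⟨φ, hφcont, ?_⟩
  have hbound : ∀ i, choquetIntegralAbs n (n : ℝ) univ (fun x => f x - φ i x)
      ≤ (2:ℝ≥0∞)⁻¹ ^ i := by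
    intro i
    rw [choquetIntegralAbs_eq_lintegral hn (fun x => f x - φ i x) (hae.sub (hφcont i).measurable.aemeasurable),
      ← heLp (fun x => f x - φ i x)]
    exact hφle i
  refine tendsto_of_tendsto_of_tendsto_of_le_of_le tendsto_const_nhds
    (ENNReal.tendsto_pow_atTop_nhds_zero_of_lt_one (by norm_num)) (fun i => zero_le) hbound
end
end

section
/- Let n ≥ 1, δ ∈ (0, n], and let f ∈ nL¹(ℝⁿ, H̃^δ_∞). Then f is an nL¹-limit of continuous functions if and only if f is H̃^δ_∞-quasicontinuous. -/
open MeasureTheory Set Metric Filter Topology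
open scoped ENNReal

noncomputable section

section Aux

variable {n : ℕ} {δ : ℝ}

lemma content_mono {E F : Set (En n)} (h : E ⊆ F) :
    dyadicContent n δ E ≤ dyadicContent n δ F := by
  unfold dyadicContent
  exact le_iInf₂ fun c hc => iInf₂_le c (h.trans hc)

lemma exists_cover {E : Set (En n)} {b : ℝ≥0∞} (h : dyadicContent n δ E < b) :
    ∃ c : ℕ → ℤ × (Fin n → ℤ), E ⊆ interior (⋃ i, dyadicCube n (c i).1 (c i).2) ∧
      ∑' i, ENNReal.ofReal (((2 : ℝ) ^ (c i).1) ^ δ) < b := by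
  unfold dyadicContent at h
  obtain ⟨c, hc⟩ := iInf_lt_iff.mp h
  obtain ⟨hcov, hs⟩ := iInf_lt_iff.mp hc
  exact ⟨c, hcov, hs⟩

lemma content_le_of_cover {E : Set (En n)} {c : ℕ → ℤ × (Fin n → ℤ)}
    (hcov : E ⊆ interior (⋃ i, dyadicCube n (c i).1 (c i).2)) :
    dyadicContent n δ E ≤ ∑' i, ENNReal.ofReal (((2 : ℝ) ^ (c i).1) ^ δ) := by
  unfold dyadicContent
  exact iInf₂_le c hcov

lemma content_outer {E : Set (En n)} {b : ℝ≥0∞} (h : dyadicContent n δ E < b) :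
    ∃ U : Set (En n), IsOpen U ∧ E ⊆ U ∧ dyadicContent n δ U < b := by
  obtain ⟨c, hcov, hs⟩ := exists_cover h
  exact ⟨interior (⋃ i, dyadicCube n (c i).1 (c i).2), isOpen_interior, hcov,
    lt_of_le_of_lt (content_le_of_cover subset_rfl) hs⟩

lemma geo (x : ℝ≥0∞) : ∑' j : ℕ, x / 2 ^ (j + 1) = x := by
  have h2 : ∑' j : ℕ, ((2 : ℝ≥0∞))⁻¹ ^ (j + 1) = 1 := by
    simp_rw [pow_succ]
    rw [ENNReal.tsum_mul_right, ENNReal.tsum_geometric, ENNReal.one_sub_inv_two,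
      inv_inv, ENNReal.mul_inv_cancel two_ne_zero ENNReal.ofNat_ne_top]
  calc ∑' j : ℕ, x / 2 ^ (j + 1) = ∑' j : ℕ, x * (2 : ℝ≥0∞)⁻¹ ^ (j + 1) := by
        simp_rw [div_eq_mul_inv, ENNReal.inv_pow]
    _ = x * ∑' j : ℕ, (2 : ℝ≥0∞)⁻¹ ^ (j + 1) := ENNReal.tsum_mul_left
    _ = x := by rw [h2, mul_one]

lemma content_union_le (A B : Set (En n)) :
    dyadicContent n δ (A ∪ B) ≤ dyadicContent n δ A + dyadicContent n δ B := by
  refine ENNReal.le_of_forall_pos_le_add fun ε hε hfin => ?_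
  have hA : dyadicContent n δ A ≠ ⊤ := (lt_of_le_of_lt le_self_add hfin).ne
  have hB : dyadicContent n δ B ≠ ⊤ := (lt_of_le_of_lt le_add_self hfin).ne
  have hε2 : ((ε : ℝ≥0∞)) / 2 ≠ 0 :=
    ENNReal.div_ne_zero.mpr ⟨ENNReal.coe_ne_zero.mpr hε.ne', ENNReal.ofNat_ne_top⟩
  obtain ⟨cA, hcovA, hsA⟩ := exists_cover (E := A) (δ := δ) (ENNReal.lt_add_right hA hε2)
  obtain ⟨cB, hcovB, hsB⟩ := exists_cover (E := B) (δ := δ) (ENNReal.lt_add_right hB hε2)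
  set c : ℕ → ℤ × (Fin n → ℤ) := fun k => if Even k then cA (k / 2) else cB (k / 2) with hc
  have hceven : ∀ i, c (2 * i) = cA i := by
    intro i
    simp only [hc, if_pos (even_two_mul i)]
    congr 1
    omega
  have hcodd : ∀ i, c (2 * i + 1) = cB i := by
    intro i
    have : ¬ Even (2 * i + 1) := by simp [Nat.even_add_one, even_two_mul]
    simp only [hc, if_neg this]
    congr 1
    omega
  have hcov : A ∪ B ⊆ interior (⋃ k, dyadicCube n (c k).1 (c k).2) := by
    rintro x (hx | hx)
    · refine interior_mono (iUnion_subset fun i => ?_) (hcovA hx)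
      rw [← hceven i]
      exact subset_iUnion (fun k => dyadicCube n (c k).1 (c k).2) (2 * i)
    · refine interior_mono (iUnion_subset fun i => ?_) (hcovB hx)
      rw [← hcodd i]
      exact subset_iUnion (fun k => dyadicCube n (c k).1 (c k).2) (2 * i + 1)
  refine le_trans (content_le_of_cover hcov) ?_
  have hsum : ∑' k, ENNReal.ofReal (((2 : ℝ) ^ (c k).1) ^ δ)
      = (∑' i, ENNReal.ofReal (((2 : ℝ) ^ (cA i).1) ^ δ))
        + ∑' i, ENNReal.ofReal (((2 : ℝ) ^ (cB i).1) ^ δ) := by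
    rw [← tsum_even_add_odd (f := fun k => ENNReal.ofReal (((2 : ℝ) ^ (c k).1) ^ δ))
      ENNReal.summable ENNReal.summable]
    congr 1
    · exact tsum_congr fun i => by rw [hceven i]
    · exact tsum_congr fun i => by rw [hcodd i]
  rw [hsum]
  calc _ ≤ (dyadicContent n δ A + (ε : ℝ≥0∞) / 2) + (dyadicContent n δ B + (ε : ℝ≥0∞) / 2) :=
        add_le_add hsA.le hsB.le
    _ = dyadicContent n δ A + dyadicContent n δ B + ((ε : ℝ≥0∞) / 2 + (ε : ℝ≥0∞) / 2) := by
        ring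
    _ = dyadicContent n δ A + dyadicContent n δ B + ε := by rw [ENNReal.add_halves]

lemma content_iUnion_le (E : ℕ → Set (En n)) :
    dyadicContent n δ (⋃ j, E j) ≤ ∑' j, dyadicContent n δ (E j) := by
  refine ENNReal.le_of_forall_pos_le_add fun ε hε hfin => ?_
  have hEj : ∀ j, dyadicContent n δ (E j) ≠ ⊤ :=
    ENNReal.ne_top_of_tsum_ne_top hfin.ne
  have hεj : ∀ j : ℕ, ((ε : ℝ≥0∞)) / 2 ^ (j + 1) ≠ 0 := fun j =>
    ENNReal.div_ne_zero.mpr ⟨ENNReal.coe_ne_zero.mpr hε.ne',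
      ENNReal.pow_ne_top ENNReal.ofNat_ne_top⟩
  have hch : ∀ j : ℕ, ∃ c : ℕ → ℤ × (Fin n → ℤ),
      E j ⊆ interior (⋃ i, dyadicCube n (c i).1 (c i).2) ∧
      ∑' i, ENNReal.ofReal (((2 : ℝ) ^ (c i).1) ^ δ)
        < dyadicContent n δ (E j) + (ε : ℝ≥0∞) / 2 ^ (j + 1) := fun j =>
    exists_cover (ENNReal.lt_add_right (hEj j) (hεj j))
  choose C hcovC hsC using hch
  let e : ℕ ≃ ℕ × ℕ := (Denumerable.eqv (ℕ × ℕ)).symm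
  set c : ℕ → ℤ × (Fin n → ℤ) := fun k => C (e k).1 (e k).2 with hc
  have hck : ∀ j i, c (e.symm (j, i)) = C j i := by
    intro j i
    simp [hc]
  have hcov : (⋃ j, E j) ⊆ interior (⋃ k, dyadicCube n (c k).1 (c k).2) := by
    rintro x hx
    obtain ⟨j, hj⟩ := mem_iUnion.mp hx
    refine interior_mono (iUnion_subset fun i => ?_) (hcovC j hj)
    rw [← hck j i]
    exact subset_iUnion (fun k => dyadicCube n (c k).1 (c k).2) (e.symm (j, i))
  refine le_trans (content_le_of_cover hcov) ?_
  have hsum : ∑' k, ENNReal.ofReal (((2 : ℝ) ^ (c k).1) ^ δ)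
      = ∑' j, ∑' i, ENNReal.ofReal (((2 : ℝ) ^ (C j i).1) ^ δ) := by
    rw [show (fun k => ENNReal.ofReal (((2 : ℝ) ^ (c k).1) ^ δ))
        = fun k => (fun p : ℕ × ℕ => ENNReal.ofReal (((2 : ℝ) ^ (C p.1 p.2).1) ^ δ)) (e k)
      from rfl]
    exact (e.tsum_eq (fun p : ℕ × ℕ => ENNReal.ofReal (((2 : ℝ) ^ (C p.1 p.2).1) ^ δ))).trans
      (ENNReal.tsum_prod (f := fun j i => ENNReal.ofReal (((2 : ℝ) ^ (C j i).1) ^ δ)))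
  rw [hsum]
  calc _ ≤ ∑' j, (dyadicContent n δ (E j) + (ε : ℝ≥0∞) / 2 ^ (j + 1)) :=
        ENNReal.tsum_le_tsum fun j => (hsC j).le
    _ = (∑' j, dyadicContent n δ (E j)) + ∑' j : ℕ, (ε : ℝ≥0∞) / 2 ^ (j + 1) :=
        ENNReal.tsum_add
    _ = (∑' j, dyadicContent n δ (E j)) + ε := by rw [geo]

/-- Distribution function of `|f|` with respect to the dyadic content. -/
def DD (n : ℕ) (δ : ℝ) (f : En n → ℝ) (t : ℝ) : ℝ≥0∞ :=
  dyadicContent n δ {x | t < |f x|}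

lemma DD_antitone (f : En n → ℝ) : Antitone (DD n δ f) := fun s t hst =>
  content_mono fun x hx => lt_of_le_of_lt hst hx

lemma DD_measurable (f : En n → ℝ) : Measurable (DD n δ f) :=
  (DD_antitone f).measurable

lemma cia_eq (f : En n → ℝ) :
    choquetIntegralAbs n δ univ f = ∫⁻ t in Ioi (0 : ℝ), DD n δ f t := by
  unfold choquetIntegralAbs choquetIntegral DD
  refine setLIntegral_congr_fun measurableSet_Ioi (fun t ht => ?_)
  congr 1
  ext x
  simp only [mem_setOf_eq, mem_univ, true_and]
  exact ENNReal.ofReal_lt_ofReal_iff_of_nonneg (le_of_lt ht)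

lemma chebyshev (f : En n → ℝ) {a : ℝ} (ha : 0 < a) :
    ENNReal.ofReal a * DD n δ f a ≤ choquetIntegralAbs n δ univ f := by
  rw [cia_eq]
  calc ENNReal.ofReal a * DD n δ f a = DD n δ f a * volume (Ioc (0:ℝ) a) := by
        rw [Real.volume_Ioc, sub_zero, mul_comm]
    _ = ∫⁻ _ in Ioc (0:ℝ) a, DD n δ f a := (setLIntegral_const _ _).symm
    _ ≤ ∫⁻ t in Ioc (0:ℝ) a, DD n δ f t :=
        setLIntegral_mono' measurableSet_Ioc fun t ht => DD_antitone f ht.2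
    _ ≤ ∫⁻ t in Ioi (0:ℝ), DD n δ f t := lintegral_mono_set Ioc_subset_Ioi_self

lemma shift_lintegral (g : ℝ → ℝ≥0∞) (M a : ℝ) :
    ∫⁻ t in Ioi a, g (t - M) = ∫⁻ t in Ioi (a - M), g t := by
  have h := (measurePreserving_add_right volume M).setLIntegral_comp_preimage_emb
      (measurableEmbedding_addRight M) (fun t => g (t - M)) (Ioi a)
  rw [preimage_add_const_Ioi] at h
  simp only [add_sub_cancel_right] at h
  exact h.symm

lemma tail_tendsto (f : En n → ℝ) (hfin : choquetIntegralAbs n δ univ f ≠ ⊤) :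
    Tendsto (fun N : ℕ => ∫⁻ t in Ioi (N : ℝ), DD n δ f t) atTop (𝓝 0) := by
  set ν := volume.withDensity (DD n δ f) with hν
  have happ : ∀ s : Set ℝ, MeasurableSet s → ν s = ∫⁻ t in s, DD n δ f t := fun s hs =>
    withDensity_apply _ hs
  have h0 : ν (Ioi (0 : ℝ)) ≠ ⊤ := by
    rw [happ _ measurableSet_Ioi, ← cia_eq]
    exact hfin
  have ht := tendsto_measure_iInter_atTop (μ := ν) (s := fun N : ℕ => Ioi (N : ℝ))
    (fun N => measurableSet_Ioi.nullMeasurableSet)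
    (fun a b hab => Ioi_subset_Ioi (by exact_mod_cast hab))
    ⟨0, by simpa using h0⟩
  have hempty : ⋂ N : ℕ, Ioi ((N : ℝ)) = ∅ := by
    ext x
    simp only [mem_iInter, mem_Ioi, mem_empty_iff_false, iff_false, not_forall, not_lt]
    obtain ⟨k, hk⟩ := exists_nat_gt x
    exact ⟨k, hk.le⟩
  rw [hempty, measure_empty] at ht
  exact ht.congr fun N => happ _ measurableSet_Ioi

/-- Truncation at level `M`. -/
def trunc (M y : ℝ) : ℝ := max (-M) (min y M)

lemma trunc_continuous (M : ℝ) : Continuous (trunc M) :=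
  continuous_const.max (continuous_id.min continuous_const)

lemma trunc_abs_le {M : ℝ} (hM : 0 ≤ M) (y : ℝ) : |trunc M y| ≤ M := by
  rw [abs_le]
  constructor
  · exact le_max_left _ _
  · exact max_le (by linarith) (min_le_right _ _)

lemma trunc_eq {M y : ℝ} (h : |y| ≤ M) : trunc M y = y := by
  rw [abs_le] at h
  unfold trunc
  rw [min_eq_left h.2, max_eq_right h.1]

lemma abs_sub_trunc {M : ℝ} (hM : 0 ≤ M) (y : ℝ) :
    |y - trunc M y| ≤ max (|y| - M) 0 := by
  unfold trunc
  rcases le_total y (-M) with h | h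
  · rw [min_eq_left (by linarith), max_eq_left h, sub_neg_eq_add,
      abs_of_nonpos (by linarith), abs_of_nonpos (by linarith)]
    have h0 := le_max_left (-y - M) (0 : ℝ)
    linarith
  · rcases le_total y M with h2 | h2
    · rw [min_eq_left h2, max_eq_right h]
      simp
    · rw [min_eq_right h2, max_eq_right (by linarith : -M ≤ M),
        abs_of_nonneg (by linarith), abs_of_nonneg (by linarith : (0:ℝ) ≤ y)]
      exact le_max_of_le_left (by linarith)

lemma approx (f : En n → ℝ) (M : ℝ) (hM : 0 < M) (O : Set (En n)) (hO : IsOpen O)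
    (hc : Continuous (Oᶜ.restrict f)) :
    ∃ g : En n → ℝ, Continuous g ∧
      choquetIntegralAbs n δ univ (fun x => f x - g x) ≤
        ENNReal.ofReal (2 * M) * dyadicContent n δ O + 3 * ∫⁻ t in Ioi M, DD n δ f t := by
  classical
  -- Tietze extension of the truncated function
  have hF : Continuous (Oᶜ.restrict fun x => trunc M (f x)) :=
    (trunc_continuous M).comp hc
  obtain ⟨G, hG⟩ := ContinuousMap.exists_restrict_eq (Y := ℝ) hO.isClosed_compl
    ⟨Oᶜ.restrict fun x => trunc M (f x), hF⟩
  set g : En n → ℝ := fun x => trunc M (G x) with hgdef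
  have hgc : Continuous g := (trunc_continuous M).comp G.continuous
  have hg1 : ∀ x, |g x| ≤ M := fun x => trunc_abs_le hM.le _
  have hg2 : ∀ x ∉ O, g x = trunc M (f x) := by
    intro x hx
    have h1 : G x = trunc M (f x) := ContinuousMap.congr_fun hG ⟨x, hx⟩
    rw [hgdef]
    simp only
    rw [h1]
    exact trunc_eq (trunc_abs_le hM.le _)
  refine ⟨g, hgc, ?_⟩
  -- pointwise inclusion of superlevel sets
  have hincl : ∀ s : ℝ, 0 < s → {x | s < |f x - g x|} ⊆
      (O ∩ {x | s - M < |f x|}) ∪ {x | M + s < |f x|} := by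
    intro s hs x hx
    simp only [mem_setOf_eq] at hx
    by_cases hxO : x ∈ O
    · left
      refine ⟨hxO, ?_⟩
      have h1 : |f x - g x| ≤ |f x| + |g x| := by
        calc |f x - g x| = |f x + -g x| := by rw [sub_eq_add_neg]
          _ ≤ |f x| + |-g x| := abs_add_le _ _
          _ = |f x| + |g x| := by rw [abs_neg]
      have h2 := hg1 x
      simp only [mem_setOf_eq]
      linarith
    · right
      rw [hg2 x hxO] at hx
      have h2 := abs_sub_trunc hM.le (f x)
      have h3 : s < max (|f x| - M) 0 := lt_of_lt_of_le hx h2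
      rcases lt_max_iff.mp h3 with h4 | h4
      · simp only [mem_setOf_eq]; linarith
      · linarith
  have hDb : ∀ s : ℝ, 0 < s → DD n δ (fun x => f x - g x) s ≤
      dyadicContent n δ (O ∩ {x | s - M < |f x|}) + DD n δ f (M + s) := fun s hs =>
    (content_mono (hincl s hs)).trans (content_union_le _ _)
  have hmeas2 : Measurable fun s : ℝ => DD n δ f (s - M) :=
    (DD_measurable f).comp (measurable_id.sub measurable_const)
  have hshift1 : ∫⁻ s in Ioi (0:ℝ), DD n δ f (M + s) = ∫⁻ t in Ioi M, DD n δ f t := by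
    have h := shift_lintegral (DD n δ f) (-M) 0
    simp only [sub_neg_eq_add, zero_sub, neg_neg, zero_add] at h
    rw [← h]
    exact lintegral_congr fun s => by rw [add_comm]
  have hshift2 : ∫⁻ s in Ioi (2*M), DD n δ f (s - M) = ∫⁻ t in Ioi M, DD n δ f t := by
    have h := shift_lintegral (DD n δ f) M (2*M)
    rwa [show 2*M - M = M by ring] at h
  rw [cia_eq]
  have hsplit : (Ioi (0:ℝ)) = Ioc 0 (2*M) ∪ Ioi (2*M) :=
    (Ioc_union_Ioi_eq_Ioi (by linarith)).symm
  rw [hsplit, lintegral_union measurableSet_Ioi (Ioc_disjoint_Ioi le_rfl)]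
  have hI1 : ∫⁻ s in Ioc (0:ℝ) (2*M), DD n δ (fun x => f x - g x) s ≤
      ENNReal.ofReal (2*M) * dyadicContent n δ O + ∫⁻ t in Ioi M, DD n δ f t := by
    calc ∫⁻ s in Ioc (0:ℝ) (2*M), DD n δ (fun x => f x - g x) s
        ≤ ∫⁻ s in Ioc (0:ℝ) (2*M), (dyadicContent n δ O + DD n δ f (M + s)) :=
          setLIntegral_mono' measurableSet_Ioc fun s hs =>
            (hDb s hs.1).trans (add_le_add (content_mono inter_subset_left) le_rfl)
      _ = (∫⁻ _ in Ioc (0:ℝ) (2*M), dyadicContent n δ O)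
            + ∫⁻ s in Ioc (0:ℝ) (2*M), DD n δ f (M + s) :=
          lintegral_add_left measurable_const _
      _ ≤ ENNReal.ofReal (2*M) * dyadicContent n δ O + ∫⁻ t in Ioi M, DD n δ f t := by
          refine add_le_add ?_ ?_
          · exact le_of_eq (by rw [setLIntegral_const, Real.volume_Ioc, sub_zero, mul_comm])
          · rw [← hshift1]
            exact lintegral_mono_set Ioc_subset_Ioi_self
  have hI2 : ∫⁻ s in Ioi (2*M), DD n δ (fun x => f x - g x) s ≤
      (∫⁻ t in Ioi M, DD n δ f t) + ∫⁻ t in Ioi M, DD n δ f t := by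
    calc ∫⁻ s in Ioi (2*M), DD n δ (fun x => f x - g x) s
        ≤ ∫⁻ s in Ioi (2*M), (DD n δ f (s - M) + DD n δ f (M + s)) :=
          setLIntegral_mono' measurableSet_Ioi fun s hs =>
            (hDb s (lt_trans (by linarith) (mem_Ioi.mp hs))).trans
              (add_le_add (content_mono inter_subset_right) le_rfl)
      _ = (∫⁻ s in Ioi (2*M), DD n δ f (s - M)) + ∫⁻ s in Ioi (2*M), DD n δ f (M + s) :=
          lintegral_add_left hmeas2 _
      _ ≤ (∫⁻ t in Ioi M, DD n δ f t) + ∫⁻ t in Ioi M, DD n δ f t := by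
          refine add_le_add (le_of_eq hshift2) ?_
          rw [← hshift1]
          exact lintegral_mono_set (Ioi_subset_Ioi (by linarith))
  refine le_trans (add_le_add hI1 hI2) (le_of_eq ?_)
  ring

end Aux

/-- `f ∈ nL¹(ℝⁿ, H̃^δ_∞)` is an `nL¹`-limit of continuous functions
if and only if `f` is `H̃^δ_∞`-quasicontinuous. -/
theorem nL1_limit_iff_quasicontinuous (n : ℕ) (hn : 1 ≤ n)
    (δ : ℝ) (hδ0 : 0 < δ) (hδn : δ ≤ n)
    (f : En n → ℝ) (hf : choquetIntegralAbs n δ univ f < ⊤) :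
    (∃ φ : ℕ → En n → ℝ, (∀ i, Continuous (φ i)) ∧
      Tendsto (fun i => choquetIntegralAbs n δ univ (fun x => f x - φ i x))
        atTop (𝓝 0)) ↔
    (∀ ε : ℝ, 0 < ε → ∃ O : Set (En n), IsOpen O ∧
      dyadicContent n δ O < ENNReal.ofReal ε ∧ Continuous (Oᶜ.restrict f)) := by
  
  constructor
  · rintro ⟨φ, hφc, hφt⟩ ε hε
    have hhalf : (0:ℝ) < ε / 2 := by linarith
    set a : ℕ → ℝ≥0∞ := fun j => ENNReal.ofReal (ε/2) / 2 ^ (j+1) with ha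
    have ha0 : ∀ j, a j ≠ 0 := fun j => ENNReal.div_ne_zero.mpr
      ⟨(ENNReal.ofReal_pos.mpr hhalf).ne', ENNReal.pow_ne_top ENNReal.ofNat_ne_top⟩
    have hbpos : ∀ j : ℕ, (0:ℝ≥0∞) < ENNReal.ofReal ((1/2:ℝ)^j) * a j := fun j =>
      ENNReal.mul_pos (ENNReal.ofReal_pos.mpr (by positivity)).ne' (ha0 j)
    have hex : ∀ j : ℕ, ∃ i, choquetIntegralAbs n δ univ (fun x => f x - φ i x)
        < ENNReal.ofReal ((1/2:ℝ)^j) * a j := fun j =>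
      (hφt.eventually_lt_const (hbpos j)).exists
    choose idx hidx using hex
    have hDj : ∀ j : ℕ, DD n δ (fun x => f x - φ (idx j) x) ((1/2:ℝ)^j) < a j := by
      intro j
      have h1 := chebyshev (n := n) (δ := δ) (fun x => f x - φ (idx j) x)
        (a := (1/2:ℝ)^j) (by positivity)
      have h2 := lt_of_le_of_lt h1 (hidx j)
      exact (ENNReal.mul_lt_mul_iff_right (ENNReal.ofReal_pos.mpr (by positivity)).ne'
        ENNReal.ofReal_ne_top).mp h2
    have hU : ∀ j : ℕ, ∃ U : Set (En n), IsOpen U ∧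
        {x | (1/2:ℝ)^j < |f x - φ (idx j) x|} ⊆ U ∧ dyadicContent n δ U < a j :=
      fun j => content_outer (hDj j)
    choose U hUopen hUsub hUsmall using hU
    refine ⟨⋃ j, U j, isOpen_iUnion hUopen, ?_, ?_⟩
    · calc dyadicContent n δ (⋃ j, U j) ≤ ∑' j, dyadicContent n δ (U j) :=
            content_iUnion_le U
        _ ≤ ∑' j : ℕ, a j := ENNReal.tsum_le_tsum fun j => (hUsmall j).le
        _ = ENNReal.ofReal (ε/2) := geo _
        _ < ENNReal.ofReal ε := (ENNReal.ofReal_lt_ofReal_iff hε).mpr (by linarith)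
    · have hbound : ∀ j : ℕ, ∀ x ∈ (⋃ j, U j)ᶜ, |f x - φ (idx j) x| ≤ (1/2:ℝ)^j := by
        intro j x hx
        by_contra hcon
        push_neg at hcon
        exact hx (mem_iUnion.mpr ⟨j, hUsub j hcon⟩)
      have htu : TendstoUniformlyOn (fun j x => φ (idx j) x) f atTop (⋃ j, U j)ᶜ := by
        rw [Metric.tendstoUniformlyOn_iff]
        intro η hη
        obtain ⟨j0, hj0⟩ := exists_pow_lt_of_lt_one hη (by norm_num : (1/2:ℝ) < 1)
        filter_upwards [eventually_ge_atTop j0] with j hj x hx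
        have h1 := hbound j x hx
        have h2 : ((1:ℝ)/2)^j ≤ (1/2:ℝ)^j0 :=
          pow_le_pow_of_le_one (by norm_num) (by norm_num) hj
        rw [Real.dist_eq]
        calc |f x - φ (idx j) x| ≤ (1/2:ℝ)^j := h1
          _ ≤ (1/2:ℝ)^j0 := h2
          _ < η := hj0
      have hco : ContinuousOn f (⋃ j, U j)ᶜ :=
        htu.continuousOn (Eventually.of_forall fun j => (hφc (idx j)).continuousOn).frequently
      exact continuousOn_iff_continuous_restrict.mp hco
  · intro hq
    have htail := tail_tendsto (n := n) (δ := δ) f hf.ne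
    have hq' : ∀ i : ℕ, ∃ O : Set (En n), IsOpen O ∧
        dyadicContent n δ O < ENNReal.ofReal (1/((i:ℝ)+1)^2) ∧
        Continuous (Oᶜ.restrict f) := fun i => hq (1/((i:ℝ)+1)^2) (by positivity)
    choose O hOopen hOsmall hOcont using hq'
    have happ : ∀ i : ℕ, ∃ g : En n → ℝ, Continuous g ∧
        choquetIntegralAbs n δ univ (fun x => f x - g x) ≤
          ENNReal.ofReal (2*((i:ℝ)+1)) * dyadicContent n δ (O i)
            + 3 * ∫⁻ t in Ioi ((i:ℝ)+1), DD n δ f t :=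
      fun i => approx f ((i:ℝ)+1) (by positivity) (O i) (hOopen i) (hOcont i)
    choose g hgc hgb using happ
    refine ⟨g, hgc, ?_⟩
    have hb1 : ∀ i : ℕ, ENNReal.ofReal (2*((i:ℝ)+1)) * dyadicContent n δ (O i)
        ≤ ENNReal.ofReal (2/((i:ℝ)+1)) := by
      intro i
      calc ENNReal.ofReal (2*((i:ℝ)+1)) * dyadicContent n δ (O i)
          ≤ ENNReal.ofReal (2*((i:ℝ)+1)) * ENNReal.ofReal (1/((i:ℝ)+1)^2) :=
            mul_le_mul_right (hOsmall i).le _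
        _ = ENNReal.ofReal ((2*((i:ℝ)+1)) * (1/((i:ℝ)+1)^2)) :=
            (ENNReal.ofReal_mul (by positivity)).symm
        _ = ENNReal.ofReal (2/((i:ℝ)+1)) := by
            congr 1
            have hi : ((i:ℝ)+1) ≠ 0 := by positivity
            field_simp
    have hcast : ∀ i : ℕ, Ioi ((i:ℝ)+1) = Ioi (((i+1 : ℕ)):ℝ) := by
      intro i
      push_cast
      rfl
    have hble : ∀ i : ℕ, choquetIntegralAbs n δ univ (fun x => f x - g i x)
        ≤ ENNReal.ofReal (2/((i:ℝ)+1)) + 3 * ∫⁻ t in Ioi (((i+1:ℕ)):ℝ), DD n δ f t := by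
      intro i
      refine (hgb i).trans (add_le_add (hb1 i) ?_)
      rw [hcast i]
    have h1 : Tendsto (fun i : ℕ => (2:ℝ)/((i:ℝ)+1)) atTop (𝓝 0) := by
      have h0 := (tendsto_const_div_atTop_nhds_zero_nat (2:ℝ)).comp (tendsto_add_atTop_nat 1)
      refine h0.congr fun i => ?_
      simp only [Function.comp]
      push_cast
      ring
    have h2 : Tendsto (fun i : ℕ => ENNReal.ofReal (2/((i:ℝ)+1))) atTop (𝓝 0) := by
      have := ENNReal.tendsto_ofReal h1
      simpa using this
    have h3 : Tendsto (fun i : ℕ => 3 * ∫⁻ t in Ioi (((i+1:ℕ)):ℝ), DD n δ f t)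
        atTop (𝓝 0) := by
      have h4 := htail.comp (tendsto_add_atTop_nat 1)
      have h5 := ENNReal.Tendsto.const_mul (a := 3) h4 (Or.inr (by norm_num))
      simpa using h5
    exact tendsto_of_tendsto_of_tendsto_of_le_of_le tendsto_const_nhds
      (by simpa using h2.add h3) (fun i => zero_le) hble
end
end
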